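/- arXiv:2411.00791 — 9 statements merged into one kernel-verified Lean document; each statement's English description precedes it below -/
import Mathlib

section
/- For every real number k with k ≥ 1/π and every real number y, one has k·y² ≥ y − sin(y). -/
open Real

lemma key_sin_ge (y : ℝ) (hy : 0 ≤ y) : π * Real.sin y ≥ π * y - y ^ 2 := by
  have hpi := Real.pi_gt_d6
  have hpi' := Real.pi_lt_d2
  have hpos : (0:ℝ) < π := Real.pi_pos
  rcases le_or_gt y 1 with h1 | h1
  · rcases eq_or_lt_of_le hy with h0 | h0
    · simp [← h0]
    · have hs : y - y^3/4 < Real.sin y := by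
        have := Real.sin_gt_sub_cube h0
        nlinarith [pow_pos h0 3]
      have hA : π * (y - y^3/4) < π * Real.sin y := by
        exact mul_lt_mul_of_pos_left hs hpos
      have hB : (0:ℝ) ≤ y^2 * (4 - π * y) := by
        apply mul_nonneg (sq_nonneg y)
        nlinarith
      nlinarith
  · rcases le_or_gt y (π - 1) with h2 | h2
    · have hc : Real.sin y ≥ 1 - (π/2 - y)^2/2 := by
        have := Real.one_sub_sq_div_two_le_cos (x := π/2 - y)
        rwa [Real.cos_pi_div_two_sub] at this
      have hA : π * (1 - (π/2 - y)^2/2) ≤ π * Real.sin y :=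
        mul_le_mul_of_nonneg_left hc hpos.le
      have hc2 : (0:ℝ) ≤ (y - 1) * (π - 1 - y) := by
        apply mul_nonneg <;> linarith
      have hc3 : (0:ℝ) ≤ (π/2 - 1) * ((y - 1) * (π - 1 - y)) := by
        apply mul_nonneg _ hc2
        linarith
      nlinarith [sq_nonneg (π - 3.141592), sq_nonneg (3.15 - π)]
    · rcases le_or_gt y π with h3 | h3
      · have ht0 : 0 ≤ π - y := by linarith
        rcases eq_or_lt_of_le ht0 with h0 | h0
        · have hyy : y = π := by linarith
          simp [hyy]
          nlinarith
        · have ht1 : π - y < 1 := by linarith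
          have hs : (π - y) - (π - y)^3/4 < Real.sin (π - y) := by
            have := Real.sin_gt_sub_cube h0
            nlinarith [pow_pos h0 3]
          rw [Real.sin_pi_sub] at hs
          have hA : π * ((π - y) - (π - y)^3/4) < π * Real.sin y :=
            mul_lt_mul_of_pos_left hs hpos
          have hB : (0:ℝ) ≤ (π - y)^2 * ((4 - π * (π - y)) * y) := by
            apply mul_nonneg (sq_nonneg _)
            apply mul_nonneg _ hy
            nlinarith
          nlinarith
      · rcases le_or_gt y (π + 1) with h4 | h4
        · have hs : Real.sin (y - π) ≤ y - π := Real.sin_le (by linarith)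
          have heq := Real.sin_sub_pi y
          have hsin : Real.sin y = - Real.sin (y - π) := by linarith
          rw [hsin]
          nlinarith [sq_nonneg (y - π)]
        · have hb : Real.sin y ≥ -1 := Real.neg_one_le_sin y
          have h5 : (0:ℝ) ≤ (y - (π + 1)) * (y - π) := by
            apply mul_nonneg <;> linarith
          nlinarith

theorem ky_sq_ge_y_sub_sin (k : ℝ) (hk : k ≥ 1 / π) (y : ℝ) :
    k * y ^ 2 ≥ y - Real.sin y := by
  have hpos : (0:ℝ) < π := Real.pi_pos
  have hk' : 1 ≤ k * π := (div_le_iff₀ hpos).mp hk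
  rcases le_or_gt 0 y with hy | hy
  · have hkey := key_sin_ge y hy
    have h1 : y - Real.sin y ≤ y ^ 2 / π :=
      (le_div_iff₀ hpos).mpr (by linarith)
    have h2 : y ^ 2 / π ≤ k * y ^ 2 := by
      rw [div_le_iff₀ hpos]
      nlinarith [sq_nonneg y]
    linarith
  · have hsy : Real.sin y ≥ y := by
      have := Real.sin_le (x := -y) (by linarith)
      rw [Real.sin_neg] at this
      linarith
    have hk0 : 0 ≤ k := le_trans (by positivity) hk
    nlinarith [sq_nonneg y]
end

section
/- For every nonzero real number y, (y − sin(y))/y² ≤ 1/π, and equality holds at y = π; that is, the function p(y) = (y − sin(y))/y² attains its absolute maximum value 1/π at y = π. -/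
open Real

lemma sin_ge_quad_half (x : ℝ) (h0 : 0 ≤ x) (h1 : x ≤ π / 2) :
    (π * x - x ^ 2) / π ≤ Real.sin x := by
  have hπ := Real.pi_pos
  rw [div_le_iff₀ hπ]
  rcases le_or_gt x 1 with hx1 | hx1
  · rcases eq_or_lt_of_le h0 with h | h
    · simp [← h]
    · have hc := Real.sin_gt_sub_cube h
      have hπ' := Real.pi_lt_d2
      have hkey : 0 ≤ x ^ 2 * (4 - π * x) :=
        mul_nonneg (sq_nonneg x) (by nlinarith [mul_le_of_le_one_right hπ.le hx1])
      nlinarith [mul_lt_mul_of_pos_left hc hπ]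
  · rcases le_or_gt (π - 2) x with hx2 | hx2
    · have hj := Real.mul_le_sin h0 h1
      rw [div_mul_eq_mul_div, div_le_iff₀ hπ] at hj
      nlinarith [mul_nonneg (by linarith : (0:ℝ) ≤ x - (π - 2)) h0]
    · have hs1 : Real.sin 1 ≤ Real.sin x := by
        have := Real.strictMonoOn_sin.monotoneOn (a := 1) (b := x)
          (by constructor <;> [linarith [Real.pi_gt_three]; linarith])
          (by constructor <;> linarith)
          hx1.le
        exact this
      have hc := Real.sin_gt_sub_cube (x := 1) (by norm_num)
      have hπ' := Real.pi_lt_d2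
      have hπ'' := Real.pi_gt_d6
      nlinarith

lemma sin_ge_quad (x : ℝ) (h0 : 0 ≤ x) (h1 : x ≤ π) :
    (π * x - x ^ 2) / π ≤ Real.sin x := by
  rcases le_or_gt x (π / 2) with hx | hx
  · exact sin_ge_quad_half x h0 hx
  · have h := sin_ge_quad_half (π - x) (by linarith) (by linarith)
    rw [Real.sin_pi_sub] at h
    calc (π * x - x ^ 2) / π = (π * (π - x) - (π - x) ^ 2) / π := by ring_nf
    _ ≤ Real.sin x := h

theorem p_max_at_pi :
    (∀ y : ℝ, y ≠ 0 → (y - Real.sin y) / y ^ 2 ≤ 1 / π) ∧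
    (π - Real.sin π) / π ^ 2 = 1 / π := by
  have hπ := Real.pi_pos
  constructor
  · intro y hy
    have hy2 : (0:ℝ) < y ^ 2 := by positivity
    rw [div_le_div_iff₀ hy2 hπ]
    rcases lt_trichotomy y 0 with h | h | h
    · have := Real.le_sin h.le
      nlinarith
    · exact absurd h hy
    · rcases le_or_gt y π with hyπ | hyπ
      · have := sin_ge_quad y h.le hyπ
        rw [div_le_iff₀ hπ] at this
        nlinarith
      · have h1 : Real.sin (y - π) ≤ y - π := Real.sin_le (by linarith)
        have h2 : Real.sin y = -Real.sin (y - π) := by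
          rw [Real.sin_sub, Real.sin_pi, Real.cos_pi]; ring
        nlinarith [sq_nonneg (y - π)]
  · rw [Real.sin_pi, sub_zero, pow_two]
    rw [div_mul_eq_div_div, div_self hπ.ne']
end

section
/- For every real number y, sin(y) ≥ y − y²/π. -/
open Real

lemma cubic_le_sin {x : ℝ} (hx : 0 ≤ x) : x - x ^ 3 / 6 ≤ Real.sin x := by
  have hmono : MonotoneOn (fun t : ℝ => Real.sin t - (t - t ^ 3 / 6)) (Set.Ici 0) := by
    apply monotoneOn_of_deriv_nonneg (convex_Ici 0)
    · exact (Real.continuous_sin.sub (by continuity)).continuousOn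
    · intro t ht
      exact (Real.differentiable_sin.sub (by fun_prop)).differentiableAt.differentiableWithinAt
    · intro t ht
      have : deriv (fun t : ℝ => Real.sin t - (t - t ^ 3 / 6)) t
          = Real.cos t - (1 - t ^ 2 / 2) := by
        have h1 : HasDerivAt (fun t : ℝ => Real.sin t - (t - t ^ 3 / 6))
            (Real.cos t - (1 - 3 * t ^ 2 / 6)) t := by
          exact (Real.hasDerivAt_sin t).sub
            ((hasDerivAt_id t).sub (((hasDerivAt_pow 3 t).div_const 6)))
            |>.congr_deriv (by ring)
        rw [h1.deriv]; ring
      rw [this]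
      have := Real.one_sub_sq_div_two_le_cos (x := t)
      linarith
  have h0 : (fun t : ℝ => Real.sin t - (t - t ^ 3 / 6)) 0 ≤
      (fun t : ℝ => Real.sin t - (t - t ^ 3 / 6)) x :=
    hmono (Set.self_mem_Ici) hx hx
  simp at h0
  linarith

theorem sin_ge_sub_sq_div_pi (y : ℝ) : Real.sin y ≥ y - y ^ 2 / π := by
  have hpi : (0:ℝ) < π := Real.pi_pos
  rcases le_or_gt y 0 with hy | hy
  · have h1 : y ≤ Real.sin y := by
      have := Real.sin_le (x := -y) (by linarith)
      have hs : Real.sin (-y) = -Real.sin y := Real.sin_neg y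
      linarith [hs ▸ this]
    have h2 : 0 ≤ y ^ 2 / π := div_nonneg (sq_nonneg y) hpi.le
    linarith
  rcases le_or_gt y (π / 2) with h2 | h2
  · -- 0 < y ≤ π/2 : cubic bound
    have hc := cubic_le_sin hy.le
    have hlt : π < 3.15 := Real.pi_lt_d2
    have hdiv : y ^ 3 / 6 ≤ y ^ 2 / π := by
      rw [div_le_div_iff₀ (by norm_num) hpi]
      have h7 : y * π ≤ 6 := by
        nlinarith [mul_le_mul_of_nonneg_right h2 hpi.le]
      nlinarith [mul_le_mul_of_nonneg_left h7 (sq_nonneg y)]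
    linarith
  rcases le_or_gt y π with h3 | h3
  · -- π/2 < y ≤ π : symmetry
    set z := π - y with hz
    have hz0 : 0 ≤ z := by linarith
    have hzle : z ≤ π / 2 := by simp [hz]; linarith
    have hc := cubic_le_sin hz0
    have hs : Real.sin y = Real.sin z := by rw [hz, Real.sin_pi_sub]
    have hlt : π < 3.15 := Real.pi_lt_d2
    have key : z - z ^ 2 / π ≤ Real.sin y := by
      rw [hs]
      have hdiv : z ^ 3 / 6 ≤ z ^ 2 / π := by
        rw [div_le_div_iff₀ (by norm_num) hpi]
        have h7 : z * π ≤ 6 := by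
          nlinarith [mul_le_mul_of_nonneg_right hzle hpi.le]
        nlinarith [mul_le_mul_of_nonneg_left h7 (sq_nonneg z)]
      linarith
    have heq : z - z ^ 2 / π = y - y ^ 2 / π := by
      field_simp [hz]; ring
    linarith [heq ▸ key]
  · -- y > π
    have hs : Real.sin (y - π) = -Real.sin y := Real.sin_sub_pi y
    have hle : Real.sin (y - π) ≤ y - π := Real.sin_le (by linarith)
    have : -(y - π) ≤ Real.sin y := by linarith
    have hsq : (y - π) ^ 2 ≥ 0 := sq_nonneg _
    have h6 : y - y ^ 2 / π ≤ π - y := by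
      have h7 : 2 * y - π ≤ y ^ 2 / π := by
        rw [le_div_iff₀ hpi]; nlinarith [hsq]
      linarith
    linarith
end

section
/- Let f : ℝ → ℝ be continuously differentiable with f(0) = 0 and f(2) = 0. Then ∫₀² f'(t)² dt ≥ (π/2)² · ∫₀² f(t)² dt. -/
open Real intervalIntegral

open Filter Topology

lemma tendsto_sin_div' : Tendsto (fun x : ℝ => Real.sin x / x) (𝓝[≠] (0:ℝ)) (𝓝 1) := by
  have h := (Real.hasDerivAt_sin 0)
  rw [hasDerivAt_iff_tendsto_slope] at h
  simp only [Real.sin_zero, Real.cos_zero] at h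
  refine h.congr' ?_
  filter_upwards [self_mem_nhdsWithin] with x hx
  simp [slope_def_field, div_eq_inv_mul]

lemma tendsto_div_sin' : Tendsto (fun x : ℝ => x / Real.sin (π/2*x)) (𝓝[≠] (0:ℝ)) (𝓝 (2/π)) := by
  have hmap : Tendsto (fun x : ℝ => π/2*x) (𝓝[≠] (0:ℝ)) (𝓝[≠] (0:ℝ)) := by
    apply tendsto_nhdsWithin_of_tendsto_nhds_of_eventually_within
    · have : Tendsto (fun x : ℝ => π/2*x) (𝓝 (0:ℝ)) (𝓝 (π/2*0)) :=
        (continuous_const.mul continuous_id).tendsto 0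
      simpa using this.mono_left nhdsWithin_le_nhds
    · filter_upwards [self_mem_nhdsWithin] with x hx
      simp only [Set.mem_compl_iff, Set.mem_singleton_iff] at hx ⊢
      exact mul_ne_zero (by positivity) hx
  have h1 : Tendsto (fun x : ℝ => (Real.sin (π/2*x) / (π/2*x))⁻¹) (𝓝[≠] (0:ℝ)) (𝓝 1) := by
    simpa using (tendsto_sin_div'.comp hmap).inv₀ one_ne_zero
  have h2 : Tendsto (fun x : ℝ => (2/π) * (Real.sin (π/2*x) / (π/2*x))⁻¹) (𝓝[≠] (0:ℝ))
      (𝓝 (2/π)) := by simpa using h1.const_mul (2/π)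
  refine h2.congr' ?_
  filter_upwards [self_mem_nhdsWithin] with x hx
  simp only [Set.mem_compl_iff, Set.mem_singleton_iff] at hx
  have hπ := Real.pi_ne_zero
  rw [inv_div, ← mul_div_assoc]
  congr 1
  field_simp

lemma sin_pos' {t : ℝ} (ht : t ∈ Set.Ioo (0:ℝ) 2) : 0 < Real.sin (π/2*t) := by
  apply Real.sin_pos_of_pos_of_lt_pi
  · nlinarith [Real.pi_pos, ht.1]
  · nlinarith [Real.pi_pos, ht.2]

lemma key_id (A B s u : ℝ) (hu : u ≠ 0) :
    π/2 * (A/u)^2 * (u/s) * B * u = π/2 * A^2 * (B/s) := by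
  rcases eq_or_ne s 0 with rfl|hs
  · simp
  · field_simp

lemma limit_zero (f : ℝ → ℝ) (hf : ContDiff ℝ 1 f) (h0 : f 0 = 0) :
    Tendsto (fun t => π/2 * f t ^ 2 * (Real.cos (π/2*t) / Real.sin (π/2*t)))
      (𝓝[>] (0:ℝ)) (𝓝 0) := by
  have hslope : Tendsto (fun t => f t / t) (𝓝[≠] (0:ℝ)) (𝓝 (deriv f 0)) := by
    have h := (hf.differentiable one_ne_zero 0).hasDerivAt
    rw [hasDerivAt_iff_tendsto_slope] at h
    refine h.congr' ?_
    filter_upwards [self_mem_nhdsWithin] with x hx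
    simp [slope_def_field, h0]
  have hcos : Tendsto (fun t : ℝ => Real.cos (π/2*t)) (𝓝[>] (0:ℝ)) (𝓝 1) := by
    have : Tendsto (fun t : ℝ => Real.cos (π/2*t)) (𝓝 (0:ℝ)) (𝓝 (Real.cos (π/2*0))) :=
      (Real.continuous_cos.comp (continuous_const.mul continuous_id)).tendsto 0
    simpa using this.mono_left nhdsWithin_le_nhds
  have hle : 𝓝[>] (0:ℝ) ≤ 𝓝[≠] (0:ℝ) :=
    nhdsWithin_mono 0 (fun x hx => ne_of_gt hx)
  have hP : Tendsto (fun t => π/2 * (f t / t)^2 * (t / Real.sin (π/2*t)) * Real.cos (π/2*t) * t)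
      (𝓝[>] (0:ℝ)) (𝓝 (π/2 * (deriv f 0)^2 * (2/π) * 1 * 0)) := by
    exact ((((tendsto_const_nhds.mul ((hslope.mono_left hle).pow 2)).mul
      (tendsto_div_sin'.mono_left hle)).mul hcos).mul
      (tendsto_id.mono_left nhdsWithin_le_nhds))
  rw [show (π/2 * (deriv f 0)^2 * (2/π) * 1 * 0 : ℝ) = 0 by ring] at hP
  refine hP.congr' ?_
  filter_upwards [Ioo_mem_nhdsGT_of_mem (Set.left_mem_Ico.mpr two_pos)] with t ht
  exact key_id (f t) (Real.cos (π/2*t)) (Real.sin (π/2*t)) t ht.1.ne'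

lemma limit_two (f : ℝ → ℝ) (hf : ContDiff ℝ 1 f) (h2 : f 2 = 0) :
    Tendsto (fun t => π/2 * f t ^ 2 * (Real.cos (π/2*t) / Real.sin (π/2*t)))
      (𝓝[<] (2:ℝ)) (𝓝 0) := by
  have hshift : Tendsto (fun t : ℝ => t - 2) (𝓝[<] (2:ℝ)) (𝓝[≠] (0:ℝ)) := by
    apply tendsto_nhdsWithin_of_tendsto_nhds_of_eventually_within
    · have : Tendsto (fun t : ℝ => t - 2) (𝓝 (2:ℝ)) (𝓝 (2 - 2)) :=
        (continuous_id.sub continuous_const).tendsto 2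
      simpa using this.mono_left nhdsWithin_le_nhds
    · filter_upwards [self_mem_nhdsWithin] with x hx
      simp only [Set.mem_Iio] at hx
      simp only [Set.mem_compl_iff, Set.mem_singleton_iff]
      intro h; linarith [sub_eq_zero.mp h]
  have hslope : Tendsto (fun t => f t / (t - 2)) (𝓝[<] (2:ℝ)) (𝓝 (deriv f 2)) := by
    have h := (hf.differentiable one_ne_zero 2).hasDerivAt
    rw [hasDerivAt_iff_tendsto_slope] at h
    have h' := h.mono_left (nhdsWithin_mono 2 (fun x hx => ne_of_lt hx) :
      𝓝[<] (2:ℝ) ≤ 𝓝[≠] (2:ℝ))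
    refine h'.congr' ?_
    filter_upwards [self_mem_nhdsWithin] with x hx
    simp [slope_def_field, h2]
  -- (t-2)/sin(π/2 t) → -(2/π)
  have hsin_eq : ∀ t : ℝ, Real.sin (π/2*t) = -Real.sin (π/2*(t-2)) := by
    intro t
    have : π/2*t = π/2*(t-2) + π := by ring
    rw [this, Real.sin_add_pi]
  have hdiv : Tendsto (fun t : ℝ => (t - 2) / Real.sin (π/2*t)) (𝓝[<] (2:ℝ)) (𝓝 (-(2/π))) := by
    have h := (tendsto_div_sin'.comp hshift).neg
    refine h.congr' ?_
    filter_upwards [self_mem_nhdsWithin] with t _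
    simp only [Function.comp_apply]
    rw [hsin_eq t, div_neg]
  have hcos : Tendsto (fun t : ℝ => Real.cos (π/2*t)) (𝓝[<] (2:ℝ)) (𝓝 (Real.cos (π/2*2))) := by
    exact ((Real.continuous_cos.comp (continuous_const.mul continuous_id)).tendsto
      2).mono_left nhdsWithin_le_nhds
  have hid : Tendsto (fun t : ℝ => t - 2) (𝓝[<] (2:ℝ)) (𝓝 0) := by
    have : Tendsto (fun t : ℝ => t - 2) (𝓝 (2:ℝ)) (𝓝 (2-2)) :=
      (continuous_id.sub continuous_const).tendsto 2
    simpa using this.mono_left nhdsWithin_le_nhds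
  have hP : Tendsto (fun t => π/2 * (f t / (t-2))^2 * ((t-2) / Real.sin (π/2*t))
        * Real.cos (π/2*t) * (t-2))
      (𝓝[<] (2:ℝ)) (𝓝 (π/2 * (deriv f 2)^2 * (-(2/π)) * Real.cos (π/2*2) * 0)) :=
    (((tendsto_const_nhds.mul (hslope.pow 2)).mul hdiv).mul hcos).mul hid
  rw [show (π/2 * (deriv f 2)^2 * (-(2/π)) * Real.cos (π/2*2) * 0 : ℝ) = 0 by ring] at hP
  refine hP.congr' ?_
  filter_upwards [Ioo_mem_nhdsLT_of_mem (by constructor <;> norm_num : (2:ℝ) ∈ Set.Ioc 0 2)]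
    with t ht
  have ht2 : t - 2 ≠ 0 := by have := ht.2; intro h; linarith [sub_eq_zero.mp h]
  exact key_id (f t) (Real.cos (π/2*t)) (Real.sin (π/2*t)) (t-2) ht2

lemma key_ineq (f : ℝ → ℝ) {t : ℝ} (ht : t ∈ Set.Ioo (0:ℝ) 2) :
    π/2 * (2 * f t * deriv f t * Real.cos (π/2*t) * Real.sin (π/2*t) - π/2 * f t ^ 2)
        / Real.sin (π/2*t) ^ 2
      ≤ deriv f t ^ 2 - (π/2)^2 * f t ^ 2 := by
  have hs := sin_pos' ht
  have pyth : Real.sin (π/2*t) ^ 2 + Real.cos (π/2*t) ^ 2 = 1 := Real.sin_sq_add_cos_sq _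
  rw [div_le_iff₀ (by positivity)]
  have h1 : (π/2)^2 * f t^2 * Real.sin (π/2*t)^2 + (π/2)^2 * f t^2 * Real.cos (π/2*t)^2
      = (π/2)^2 * f t^2 := by linear_combination (π/2)^2 * f t^2 * pyth
  nlinarith [sq_nonneg (deriv f t * Real.sin (π/2*t) - π/2 * f t * Real.cos (π/2*t)), h1]

lemma g_hasDeriv (f : ℝ → ℝ) (hf : ContDiff ℝ 1 f) {t : ℝ} (ht : t ∈ Set.Ioo (0:ℝ) 2) :
    HasDerivAt (fun u => π/2 * f u ^ 2 * (Real.cos (π/2*u) / Real.sin (π/2*u)))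
      (π/2 * (2 * f t * deriv f t * Real.cos (π/2*t) * Real.sin (π/2*t) - π/2 * f t ^ 2)
        / Real.sin (π/2*t) ^ 2) t := by
  have hne := (sin_pos' ht).ne'
  have hlin : HasDerivAt (fun u : ℝ => π/2*u) (π/2) t := by
    simpa using (hasDerivAt_id t).const_mul (π/2)
  have hs := hlin.sin
  have hc := hlin.cos
  have hq := hc.div hs hne
  have hf2 : HasDerivAt (fun u => π/2 * f u ^ 2)
      (π/2 * (2 * f t * deriv f t)) t := by
    have := ((hf.differentiable one_ne_zero t).hasDerivAt.pow 2).const_mul (π/2)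
    simpa [mul_assoc, mul_comm, mul_left_comm] using this
  have H := hf2.mul hq
  refine H.congr_deriv ?_
  have pyth : Real.sin (π/2*t)^2 + Real.cos (π/2*t)^2 = 1 := Real.sin_sq_add_cos_sq _
  have hne2 : Real.sin (π*t/2) ≠ 0 := by rw [show π*t/2 = π/2*t by ring]; exact hne
  have pyth2 : Real.sin (π*t/2) ^ 2 + Real.cos (π*t/2) ^ 2 = 1 := Real.sin_sq_add_cos_sq _
  simp only [Pi.div_apply]
  field_simp
  linear_combination (-π * f t^2) * pyth2


theorem poincare_on_zero_two (f : ℝ → ℝ) (hf : ContDiff ℝ 1 f)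
    (h0 : f 0 = 0) (h2 : f 2 = 0) :
    ∫ t in (0:ℝ)..2, (deriv f t) ^ 2 ≥ (π / 2) ^ 2 * ∫ t in (0:ℝ)..2, (f t) ^ 2 := by
  have hd' : Continuous (deriv f) := hf.continuous_deriv le_rfl
  set F : ℝ → ℝ := fun t => deriv f t ^ 2 - (π/2)^2 * f t ^ 2 with hFdef
  have hFc : Continuous F := (hd'.pow 2).sub (continuous_const.mul (hf.continuous.pow 2))
  set g : ℝ → ℝ := fun t => π/2 * f t ^ 2 * (Real.cos (π/2*t) / Real.sin (π/2*t)) with hgdef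
  set Φ : ℝ → ℝ := fun x => ∫ t in (0:ℝ)..x, F t with hΦdef
  have hΦc : Continuous Φ :=
    intervalIntegral.continuous_primitive (fun a b => hFc.intervalIntegrable a b) 0
  have step : ∀ a b : ℝ, a ∈ Set.Ioo (0:ℝ) 2 → b ∈ Set.Ioo (0:ℝ) 2 → a ≤ b →
      g b - g a ≤ Φ b - Φ a := by
    intro a b ha hb hab
    have hsub : Set.uIcc a b ⊆ Set.Ioo (0:ℝ) 2 := by
      rw [Set.uIcc_of_le hab]
      exact fun t ht => ⟨lt_of_lt_of_le ha.1 ht.1, lt_of_le_of_lt ht.2 hb.2⟩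
    set G : ℝ → ℝ := fun t => π/2 * (2 * f t * deriv f t * Real.cos (π/2*t)
        * Real.sin (π/2*t) - π/2 * f t ^ 2) / Real.sin (π/2*t)^2 with hGdef
    have hGc : ContinuousOn G (Set.uIcc a b) := by
      apply ContinuousOn.div
      · refine Continuous.continuousOn ?_
        apply continuous_const.mul
        exact ((((continuous_const.mul hf.continuous).mul hd').mul
          (Real.continuous_cos.comp (continuous_const.mul continuous_id))).mul
          (Real.continuous_sin.comp (continuous_const.mul continuous_id))).sub
          (continuous_const.mul (hf.continuous.pow 2))
      · exact Continuous.continuousOn (by fun_prop)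
      · intro t ht
        exact pow_ne_zero 2 (sin_pos' (hsub ht)).ne'
    have hftc : ∫ t in a..b, G t = g b - g a :=
      intervalIntegral.integral_eq_sub_of_hasDerivAt
        (fun t ht => g_hasDeriv f hf (hsub ht)) hGc.intervalIntegrable
    have hmono : ∫ t in a..b, G t ≤ ∫ t in a..b, F t := by
      apply intervalIntegral.integral_mono_on hab hGc.intervalIntegrable
        (hFc.intervalIntegrable a b)
      intro t ht
      exact key_ineq f (hsub ((Set.uIcc_of_le hab) ▸ ht))
    have hsplit : Φ b - Φ a = ∫ t in a..b, F t :=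
      intervalIntegral.integral_interval_sub_left (hFc.intervalIntegrable 0 b)
        (hFc.intervalIntegrable 0 a)
    linarith [hftc, hmono, hsplit]
  -- sequences approaching the endpoints
  set a : ℕ → ℝ := fun n => 1/(n+1) with hadef
  set b : ℕ → ℝ := fun n => 2 - 1/(n+1) with hbdef
  have ha_mem : ∀ n, a n ∈ Set.Ioo (0:ℝ) 2 := by
    intro n
    constructor
    · positivity
    · have h1 : (1:ℝ)/(n+1) ≤ 1 := by
        rw [div_le_one (by positivity)]
        simp
      simp only [hadef]; linarith
  have hb_mem : ∀ n, b n ∈ Set.Ioo (0:ℝ) 2 := by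
    intro n
    have h1 : (1:ℝ)/(n+1) ≤ 1 := by
      rw [div_le_one (by positivity)]
      simp
    have h2 : (0:ℝ) < 1/(n+1) := by positivity
    constructor <;> simp only [hbdef] <;> linarith
  have hab : ∀ n, a n ≤ b n := by
    intro n
    have h1 : (1:ℝ)/(n+1) ≤ 1 := by
      rw [div_le_one (by positivity)]
      simp
    simp only [hadef, hbdef]; linarith
  have ha0 : Tendsto a atTop (𝓝 0) := tendsto_one_div_add_atTop_nhds_zero_nat
  have ha_t : Tendsto a atTop (𝓝[>] (0:ℝ)) := by
    apply tendsto_nhdsWithin_of_tendsto_nhds_of_eventually_within _ ha0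
    exact Eventually.of_forall (fun n => (ha_mem n).1)
  have hb_t : Tendsto b atTop (𝓝[<] (2:ℝ)) := by
    apply tendsto_nhdsWithin_of_tendsto_nhds_of_eventually_within
    · have : Tendsto b atTop (𝓝 (2 - 0)) := tendsto_const_nhds.sub ha0
      simpa using this
    · exact Eventually.of_forall (fun n => (hb_mem n).2)
  have hglim : Tendsto (fun n => g (b n) - g (a n)) atTop (𝓝 0) := by
    have := ((limit_two f hf h2).comp hb_t).sub ((limit_zero f hf h0).comp ha_t)
    simpa using this
  have hΦlim : Tendsto (fun n => Φ (b n) - Φ (a n)) atTop (𝓝 (Φ 2 - Φ 0)) := by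
    exact ((hΦc.tendsto 2).comp (hb_t.mono_right nhdsWithin_le_nhds)).sub
      ((hΦc.tendsto 0).comp (ha_t.mono_right nhdsWithin_le_nhds))
  have hfinal : (0:ℝ) ≤ Φ 2 - Φ 0 :=
    le_of_tendsto_of_tendsto' hglim hΦlim
      (fun n => step (a n) (b n) (ha_mem n) (hb_mem n) (hab n))
  have hΦ0 : Φ 0 = 0 := intervalIntegral.integral_same
  have hint : Φ 2 = (∫ t in (0:ℝ)..2, deriv f t ^ 2)
      - (π/2)^2 * ∫ t in (0:ℝ)..2, f t ^ 2 := by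
    simp only [hΦdef, hFdef]
    rw [intervalIntegral.integral_sub (f := fun t => deriv f t ^ 2) (g := fun t => (π/2)^2 * f t ^ 2) ((hd'.pow 2).intervalIntegrable 0 2)
      ((continuous_const.mul (hf.continuous.pow 2)).intervalIntegrable 0 2),
      intervalIntegral.integral_const_mul]
  rw [ge_iff_le]
  rw [hΦ0, hint] at hfinal
  linarith
end

section
/- Let h : ℝ → ℝ be continuously differentiable with h(0) = 0 and h'(1) = 0. Then ∫₀¹ h'(t)² dt ≥ (π/2)² · ∫₀¹ h(t)² dt. -/
open Real intervalIntegral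

open Filter Topology

theorem poincare_on_zero_one (h : ℝ → ℝ) (hh : ContDiff ℝ 1 h)
    (h0 : h 0 = 0) (h1 : deriv h 1 = 0) :
    ∫ t in (0:ℝ)..1, (deriv h t) ^ 2 ≥ (π / 2) ^ 2 * ∫ t in (0:ℝ)..1, (h t) ^ 2 := by
  have hπ := Real.pi_pos
  set c : ℝ := π / 2 with hcdef
  have hcpos : 0 < c := by positivity
  have hcont : Continuous h := hh.continuous
  have hdc : Continuous (deriv h) := hh.continuous_deriv le_rfl
  have hder : ∀ t, HasDerivAt h (deriv h t) t := fun t =>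
    (hh.differentiable one_ne_zero t).hasDerivAt
  set φ : ℝ → ℝ := fun t => deriv h t ^ 2 - c ^ 2 * h t ^ 2 with hφdef
  have hφc : Continuous φ := by fun_prop
  set q : ℝ → ℝ := fun t =>
    (deriv h t - c * h t * (Real.cos (c * t) / Real.sin (c * t))) ^ 2 with hqdef
  set F : ℝ → ℝ := fun t => c * h t ^ 2 * (Real.cos (c * t) / Real.sin (c * t)) with hFdef
  -- sin positivity on (0,1]
  have hsin : ∀ t : ℝ, 0 < t → t ≤ 1 → 0 < Real.sin (c * t) := by
    intro t ht ht1
    apply Real.sin_pos_of_pos_of_lt_pi (by positivity)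
    have : c * t ≤ c := by nlinarith
    have : c < π := by rw [hcdef]; linarith
    linarith
  -- derivative of the linear map
  have hlin : ∀ t : ℝ, HasDerivAt (fun y : ℝ => c * y) c t := by
    intro t
    simpa using (hasDerivAt_id t).const_mul c
  -- key derivative identity
  have key : ∀ t : ℝ, Real.sin (c * t) ≠ 0 → HasDerivAt F (φ t - q t) t := by
    intro t hs
    have hcos : HasDerivAt (fun y : ℝ => Real.cos (c * y)) (-Real.sin (c * t) * c) t :=
      (hlin t).cos
    have hsinD : HasDerivAt (fun y : ℝ => Real.sin (c * y)) (Real.cos (c * t) * c) t :=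
      (hlin t).sin
    have hquot : HasDerivAt (fun y : ℝ => Real.cos (c * y) / Real.sin (c * y))
        ((-Real.sin (c * t) * c * Real.sin (c * t) -
          Real.cos (c * t) * (Real.cos (c * t) * c)) / Real.sin (c * t) ^ 2) t :=
      hcos.div hsinD hs
    have hsq : HasDerivAt (fun y : ℝ => c * h y ^ 2)
        (c * ((2 : ℕ) * h t ^ 1 * deriv h t)) t :=
      (((hder t).pow 2)).const_mul c
    have hF : HasDerivAt F
        (c * ((2 : ℕ) * h t ^ 1 * deriv h t) * (Real.cos (c * t) / Real.sin (c * t)) +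
         c * h t ^ 2 * ((-Real.sin (c * t) * c * Real.sin (c * t) -
          Real.cos (c * t) * (Real.cos (c * t) * c)) / Real.sin (c * t) ^ 2)) t :=
      hsq.mul hquot
    convert hF using 1
    have pyth := Real.sin_sq_add_cos_sq (c * t)
    rw [hφdef, hqdef]
    field_simp
    ring_nf
  -- FTC step on [ε, 1]
  have step : ∀ ε : ℝ, ε ∈ Set.Ioo (0:ℝ) 1 → 0 ≤ (∫ t in ε..1, φ t) + F ε := by
    intro ε hε
    obtain ⟨hε0, hε1⟩ := hε
    have huIcc : Set.uIcc ε 1 = Set.Icc ε 1 := Set.uIcc_of_le hε1.le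
    have hsne : ∀ x ∈ Set.Icc ε 1, Real.sin (c * x) ≠ 0 := fun x hx =>
      (hsin x (lt_of_lt_of_le hε0 hx.1) hx.2).ne'
    have hqcont : ContinuousOn q (Set.Icc ε 1) := by
      apply ContinuousOn.pow
      apply ContinuousOn.sub (hdc.continuousOn)
      apply ContinuousOn.mul (by fun_prop)
      exact ContinuousOn.div (by fun_prop) (by fun_prop) hsne
    have hqint : IntervalIntegrable q MeasureTheory.volume ε 1 := by
      apply ContinuousOn.intervalIntegrable; rwa [huIcc]
    have hφint : IntervalIntegrable φ MeasureTheory.volume ε 1 :=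
      hφc.intervalIntegrable ε 1
    have hGint : IntervalIntegrable (fun t => φ t - q t) MeasureTheory.volume ε 1 :=
      hφint.sub hqint
    have hftc : ∫ t in ε..1, (φ t - q t) = F 1 - F ε := by
      apply intervalIntegral.integral_eq_sub_of_hasDerivAt _ hGint
      intro x hx
      rw [huIcc] at hx
      exact key x (hsne x hx)
    have hF1 : F 1 = 0 := by
      rw [hFdef]
      simp [hcdef, Real.cos_pi_div_two]
    rw [intervalIntegral.integral_sub hφint hqint, hF1] at hftc
    have hqnn : 0 ≤ ∫ t in ε..1, q t := by
      apply intervalIntegral.integral_nonneg hε1.le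
      intro u _; positivity
    linarith
  -- limits
  have hIoo : Set.Ioo (0:ℝ) 1 ∈ 𝓝[>] (0:ℝ) :=
    Ioo_mem_nhdsGT_of_mem ⟨le_refl 0, one_pos⟩
  -- limit of the integral part
  have hint_tendsto : Tendsto (fun ε => ∫ t in ε..1, φ t) (𝓝[>] (0:ℝ))
      (𝓝 (∫ t in (0:ℝ)..1, φ t)) := by
    have hctsP : Continuous fun b => ∫ t in (1:ℝ)..b, φ t :=
      intervalIntegral.continuous_primitive (fun a b => hφc.intervalIntegrable a b) 1
    have : Continuous fun ε => ∫ t in ε..1, φ t := by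
      have : (fun ε => ∫ t in ε..1, φ t) = fun ε => -∫ t in (1:ℝ)..ε, φ t := by
        funext ε; rw [intervalIntegral.integral_symm]
      rw [this]; exact hctsP.neg
    exact (this.tendsto 0).mono_left nhdsWithin_le_nhds
  -- limit of F
  have hF_tendsto : Tendsto F (𝓝[>] (0:ℝ)) (𝓝 0) := by
    have hslope : Tendsto (fun ε => h ε / ε) (𝓝[>] (0:ℝ)) (𝓝 (deriv h 0)) := by
      have := hasDerivAt_iff_tendsto_slope.mp (hder 0)
      have h2 : Tendsto (slope h 0) (𝓝[>] (0:ℝ)) (𝓝 (deriv h 0)) :=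
        this.mono_left (nhdsWithin_mono 0 (fun x hx => ne_of_gt hx))
      refine h2.congr (fun ε => ?_)
      simp [slope, h0, div_eq_inv_mul]
    have hsinslope : Tendsto (fun ε => Real.sin (c * ε) / ε) (𝓝[>] (0:ℝ)) (𝓝 c) := by
      have hd : HasDerivAt (fun y : ℝ => Real.sin (c * y)) (Real.cos (c * 0) * c) 0 :=
        (hlin 0).sin
      have := hasDerivAt_iff_tendsto_slope.mp hd
      simp only [mul_zero, Real.cos_zero, one_mul] at this
      have h2 : Tendsto (slope (fun y : ℝ => Real.sin (c * y)) 0) (𝓝[>] (0:ℝ)) (𝓝 c) :=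
        this.mono_left (nhdsWithin_mono 0 (fun x hx => ne_of_gt hx))
      refine h2.congr (fun ε => ?_)
      simp [slope, div_eq_inv_mul]
    have hinv : Tendsto (fun ε => ε / Real.sin (c * ε)) (𝓝[>] (0:ℝ)) (𝓝 c⁻¹) := by
      have := hsinslope.inv₀ hcpos.ne'
      refine this.congr (fun ε => ?_)
      rw [inv_div]
    have hh0 : Tendsto h (𝓝[>] (0:ℝ)) (𝓝 0) := by
      have := hcont.tendsto 0
      rw [h0] at this
      exact this.mono_left nhdsWithin_le_nhds
    have hcos0 : Tendsto (fun ε => Real.cos (c * ε)) (𝓝[>] (0:ℝ)) (𝓝 1) := by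
      have : Continuous fun ε : ℝ => Real.cos (c * ε) := by fun_prop
      have := this.tendsto 0
      simp only [mul_zero, Real.cos_zero] at this
      exact this.mono_left nhdsWithin_le_nhds
    have hprod : Tendsto (fun ε => c * (h ε / ε) * h ε * Real.cos (c * ε) *
        (ε / Real.sin (c * ε))) (𝓝[>] (0:ℝ)) (𝓝 (c * deriv h 0 * 0 * 1 * c⁻¹)) :=
      ((((tendsto_const_nhds.mul hslope).mul hh0).mul hcos0).mul hinv)
    simp only [mul_zero, zero_mul] at hprod
    apply hprod.congr'
    filter_upwards [hIoo] with ε hε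
    have hε0 : ε ≠ 0 := ne_of_gt hε.1
    rw [hFdef]
    field_simp
  -- conclude nonnegativity of ∫ φ
  have hI : 0 ≤ ∫ t in (0:ℝ)..1, φ t := by
    have htend : Tendsto (fun ε => (∫ t in ε..1, φ t) + F ε) (𝓝[>] (0:ℝ))
        (𝓝 ((∫ t in (0:ℝ)..1, φ t) + 0)) := hint_tendsto.add hF_tendsto
    rw [add_zero] at htend
    apply ge_of_tendsto htend
    filter_upwards [hIoo] with ε hε
    exact step ε hε
  -- unfold φ and finish
  have h1int : IntervalIntegrable (fun t => deriv h t ^ 2) MeasureTheory.volume 0 1 :=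
    (hdc.pow 2).intervalIntegrable 0 1
  have h2int : IntervalIntegrable (fun t => c ^ 2 * h t ^ 2) MeasureTheory.volume 0 1 :=
    (continuous_const.mul (hcont.pow 2)).intervalIntegrable 0 1
  rw [hφdef] at hI
  rw [intervalIntegral.integral_sub h1int h2int,
    intervalIntegral.integral_const_mul] at hI
  rw [ge_iff_le, ← sub_nonneg]
  exact hI
end

section
/- Fix a ≥ 0 and a continuously differentiable function g : ℝ → ℝ. Suppose F : ℝ → ℝ is twice continuously differentiable with F(0) = 0 and F'(1) = 0, and suppose F minimizes S(·, g): for every continuously differentiable f : ℝ → ℝ with f(0) = 0 and f'(1) = 0 one has S(F, g) ≤ S(f, g). Then F''(t) = −(a/2)·cos(F(t) − g(t)) for every t in the open interval (0,1). -/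
open Real intervalIntegral
open MeasureTheory Metric

/-- The payoff functional of the game: `S a u v = ∫₀¹ (u'² − v'² − a·sin(u − v))`. -/
noncomputable def gameS (a : ℝ) (u v : ℝ → ℝ) : ℝ :=
  ∫ t in (0:ℝ)..1, ((deriv u t) ^ 2 - (deriv v t) ^ 2 - a * Real.sin (u t - v t))

lemma keyA (a : ℝ)
    (g : ℝ → ℝ) (hg : ContDiff ℝ 1 g)
    (F : ℝ → ℝ) (hF : ContDiff ℝ 2 F) (hF0 : F 0 = 0) (hF1 : deriv F 1 = 0)
    (hmin : ∀ f : ℝ → ℝ, ContDiff ℝ 1 f → f 0 = 0 → deriv f 1 = 0 →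
      gameS a F g ≤ gameS a f g)
    (φ : ℝ → ℝ) (hφ : ContDiff ℝ 1 φ) (hφ0 : φ 0 = 0) (hφ1 : deriv φ 1 = 0) :
    ∫ t in (0:ℝ)..1, (2 * deriv (deriv F) t + a * Real.cos (F t - g t)) * φ t = 0 := by
  have hF1c : ContDiff ℝ 1 F := hF.of_le (by norm_num)
  have hFd : Differentiable ℝ F := hF1c.differentiable one_ne_zero
  have hφd : Differentiable ℝ φ := hφ.differentiable one_ne_zero
  have hF' : ContDiff ℝ 1 (deriv F) := by
    have h2 : ContDiff ℝ ((1:ℕ) + 1) F := by exact_mod_cast hF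
    exact (contDiff_succ_iff_deriv.mp h2).2.2
  have hF'c : Continuous (deriv F) := hF'.continuous
  have hF''c : Continuous (deriv (deriv F)) := hF'.continuous_deriv le_rfl
  have hφ'c : Continuous (deriv φ) := hφ.continuous_deriv le_rfl
  have hg'c : Continuous (deriv g) := hg.continuous_deriv le_rfl
  have hFc : Continuous F := hF1c.continuous
  have hφc : Continuous φ := hφ.continuous
  have hgc : Continuous g := hg.continuous
  set G : ℝ → ℝ → ℝ := fun x t =>
    (deriv F t + x * deriv φ t) ^ 2 - (deriv g t) ^ 2 - a * Real.sin (F t + x * φ t - g t)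
    with hG
  set G' : ℝ → ℝ → ℝ := fun x t =>
    2 * (deriv F t + x * deriv φ t) * deriv φ t
      - a * (Real.cos (F t + x * φ t - g t) * φ t) with hG'
  have hGc : ∀ x, Continuous (G x) := fun x =>
    (((hF'c.add (continuous_const.mul hφ'c)).pow 2).sub (hg'c.pow 2)).sub
      (continuous_const.mul (Real.continuous_sin.comp ((hFc.add (continuous_const.mul hφc)).sub hgc)))
  have hG'c : ∀ x, Continuous (G' x) := fun x =>
    ((continuous_const.mul (hF'c.add (continuous_const.mul hφ'c))).mul hφ'c).sub
      (continuous_const.mul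
        ((Real.continuous_cos.comp ((hFc.add (continuous_const.mul hφc)).sub hgc)).mul hφc))
  have hderiv_sum : ∀ x t, deriv (fun s => F s + x * φ s) t = deriv F t + x * deriv φ t := by
    intro x t
    rw [deriv_fun_add (hFd t) ((hφd t).const_mul x), deriv_const_mul x (hφd t)]
  have hgame : ∀ x, gameS a (fun s => F s + x * φ s) g = ∫ t in (0:ℝ)..1, G x t := by
    intro x
    unfold gameS
    apply intervalIntegral.integral_congr
    intro t _
    simp only [hderiv_sum x t, hG]
  -- differentiation under the integral sign
  have main :
      HasDerivAt (fun x => ∫ t in (0:ℝ)..1, G x t) (∫ t in (0:ℝ)..1, G' 0 t) 0 := by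
    have := intervalIntegral.hasDerivAt_integral_of_dominated_loc_of_deriv_le
      (μ := volume) (a := (0:ℝ)) (b := 1) (F := G) (F' := G') (x₀ := (0:ℝ))
      (bound := fun t => 2 * (|deriv F t| + |deriv φ t|) * |deriv φ t| + |a| * |φ t|)
      (s := ball 0 1) (ball_mem_nhds 0 one_pos)
      (Filter.Eventually.of_forall fun x => (hGc x).aestronglyMeasurable)
      ((hGc 0).intervalIntegrable _ _)
      ((hG'c 0).aestronglyMeasurable)
      ?_ ?_ ?_
    · exact this.2
    · refine Filter.Eventually.of_forall fun t _ x hx => ?_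
      have hx1 : |x| < 1 := by simpa [Real.dist_eq] using hx
      rw [Real.norm_eq_abs, hG']
      have habs : |deriv F t + x * deriv φ t| ≤ |deriv F t| + |deriv φ t| := by
        refine (abs_add_le _ _).trans ?_
        rw [abs_mul]
        nlinarith [abs_nonneg (deriv φ t), abs_nonneg x]
      have h1 : |2 * (deriv F t + x * deriv φ t) * deriv φ t|
          ≤ 2 * (|deriv F t| + |deriv φ t|) * |deriv φ t| := by
        rw [abs_mul, abs_mul, abs_two]
        have := abs_nonneg (deriv φ t)
        nlinarith
      have h2 : |a * (Real.cos (F t + x * φ t - g t) * φ t)| ≤ |a| * |φ t| := by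
        rw [abs_mul, abs_mul]
        have hc := Real.abs_cos_le_one (F t + x * φ t - g t)
        have h3 : |Real.cos (F t + x * φ t - g t)| * |φ t| ≤ 1 * |φ t| :=
          mul_le_mul_of_nonneg_right hc (abs_nonneg _)
        calc |a| * (|Real.cos (F t + x * φ t - g t)| * |φ t|)
            ≤ |a| * (1 * |φ t|) := mul_le_mul_of_nonneg_left h3 (abs_nonneg a)
          _ = |a| * |φ t| := by ring
      calc |2 * (deriv F t + x * deriv φ t) * deriv φ t
            - a * (Real.cos (F t + x * φ t - g t) * φ t)|
          ≤ |2 * (deriv F t + x * deriv φ t) * deriv φ t|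
            + |a * (Real.cos (F t + x * φ t - g t) * φ t)| := abs_sub _ _
        _ ≤ _ := add_le_add h1 h2
    · exact (((continuous_const.mul (hF'c.abs.add hφ'c.abs)).mul hφ'c.abs).add
        (continuous_const.mul hφc.abs)).intervalIntegrable _ _
    · refine Filter.Eventually.of_forall fun t _ x _ => ?_
      have A : HasDerivAt (fun x : ℝ => deriv F t + x * deriv φ t) (deriv φ t) x :=
        (hasDerivAt_mul_const (deriv φ t)).const_add (deriv F t)
      have A2 : HasDerivAt (fun x : ℝ => (deriv F t + x * deriv φ t) ^ 2)
          (2 * (deriv F t + x * deriv φ t) * deriv φ t) x := by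
        have := A.pow 2
        exact this.congr_deriv (by norm_num <;> ring)
      have B : HasDerivAt (fun x : ℝ => F t + x * φ t - g t) (φ t) x :=
        ((hasDerivAt_mul_const (φ t)).const_add (F t)).sub_const (g t)
      have C : HasDerivAt (fun x : ℝ => Real.sin (F t + x * φ t - g t))
          (Real.cos (F t + x * φ t - g t) * φ t) x := (Real.hasDerivAt_sin _).comp x B
      exact (A2.sub_const ((deriv g t) ^ 2)).sub (C.const_mul a)
  -- 0 is a local minimum
  have hloc : IsLocalMin (fun x => ∫ t in (0:ℝ)..1, G x t) 0 := by
    refine Filter.Eventually.of_forall fun x => ?_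
    have e0 : (∫ t in (0:ℝ)..1, G 0 t) = gameS a F g := by
      unfold gameS
      apply intervalIntegral.integral_congr
      intro t _
      simp [hG]
    have ex : (∫ t in (0:ℝ)..1, G x t) = gameS a (fun s => F s + x * φ s) g :=
      (hgame x).symm
    show (∫ t in (0:ℝ)..1, G 0 t) ≤ ∫ t in (0:ℝ)..1, G x t
    rw [e0, ex]
    refine hmin _ (hF1c.add (contDiff_const.mul hφ)) (by simp [hF0, hφ0]) ?_
    rw [hderiv_sum x 1, hF1, hφ1]
    ring
  have hd0 : (∫ t in (0:ℝ)..1, G' 0 t) = 0 := hloc.hasDerivAt_eq_zero main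
  have hd0' : (∫ t in (0:ℝ)..1,
      (2 * deriv F t * deriv φ t - a * (Real.cos (F t - g t) * φ t))) = 0 := by
    have heq : (∫ t in (0:ℝ)..1,
        (2 * deriv F t * deriv φ t - a * (Real.cos (F t - g t) * φ t)))
        = ∫ t in (0:ℝ)..1, G' 0 t := by
      apply intervalIntegral.integral_congr
      intro t _
      simp [hG']
    rw [heq, hd0]
  -- integration by parts
  have hparts : (∫ t in (0:ℝ)..1,
      (deriv (deriv F) t * φ t + deriv F t * deriv φ t)) = 0 := by
    have := intervalIntegral.integral_deriv_mul_eq_sub (a := (0:ℝ)) (b := 1)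
      (u := deriv F) (v := φ) (u' := deriv (deriv F)) (v' := deriv φ)
      (fun t _ => ((hF'.differentiable one_ne_zero) t).hasDerivAt)
      (fun t _ => (hφd t).hasDerivAt)
      (hF''c.intervalIntegrable _ _) (hφ'c.intervalIntegrable _ _)
    rw [this, hF1, hφ0]
    ring
  have int1 : IntervalIntegrable
      (fun t => deriv (deriv F) t * φ t + deriv F t * deriv φ t) volume 0 1 :=
    ((hF''c.mul hφc).add (hF'c.mul hφ'c)).intervalIntegrable _ _
  have int2 : IntervalIntegrable
      (fun t => 2 * deriv F t * deriv φ t - a * (Real.cos (F t - g t) * φ t)) volume 0 1 :=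
    (((continuous_const.mul hF'c).mul hφ'c).sub
      (continuous_const.mul ((Real.continuous_cos.comp (hFc.sub hgc)).mul hφc))).intervalIntegrable _ _
  have expand : (∫ t in (0:ℝ)..1, (2 * deriv (deriv F) t + a * Real.cos (F t - g t)) * φ t)
      = (2 * ∫ t in (0:ℝ)..1, (deriv (deriv F) t * φ t + deriv F t * deriv φ t))
        - ∫ t in (0:ℝ)..1,
          (2 * deriv F t * deriv φ t - a * (Real.cos (F t - g t) * φ t)) := by
    rw [← intervalIntegral.integral_const_mul, ← intervalIntegral.integral_sub
      (int1.const_mul 2) int2]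
    apply intervalIntegral.integral_congr
    intro t _
    ring
  rw [expand, hparts, hd0']
  ring

lemma fund_pos (E : ℝ → ℝ) (hE : Continuous E)
    (h : ∀ φ : ℝ → ℝ, ContDiff ℝ 1 φ → φ 0 = 0 → deriv φ 1 = 0 →
      (∫ t in (0:ℝ)..1, E t * φ t) = 0)
    (t₀ : ℝ) (ht : t₀ ∈ Set.Ioo (0:ℝ) 1) (hpos : 0 < E t₀) : False := by
  -- find a ball around t₀ inside (0,1) where E > E t₀ / 2
  have hUopen : IsOpen ({t | E t₀ / 2 < E t} ∩ Set.Ioo (0:ℝ) 1) :=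
    (isOpen_lt continuous_const hE).inter isOpen_Ioo
  have ht₀U : t₀ ∈ ({t | E t₀ / 2 < E t} ∩ Set.Ioo (0:ℝ) 1) :=
    ⟨by simp; linarith, ht⟩
  obtain ⟨r, hr, hball⟩ := Metric.isOpen_iff.mp hUopen t₀ ht₀U
  -- the bump function
  set f : ContDiffBump t₀ := ⟨r/2, 3*r/4, by linarith, by linarith⟩ with hf
  set φ : ℝ → ℝ := fun t => f t with hφdef
  have hsupp : Function.support φ = ball t₀ (3*r/4) := f.support_eq
  have hsub : ball t₀ (3*r/4) ⊆ ball t₀ r := ball_subset_ball (by linarith)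
  have hzero : ∀ t, t ∉ ball t₀ r → φ t = 0 := by
    intro t htb
    by_contra hne
    exact htb (hsub (by rw [← hsupp] at *; exact Function.mem_support.mpr hne))
  have hφ0 : φ 0 = 0 := hzero 0 (fun h0 => (hball h0).2.1.ne rfl)
  have h1not : (1:ℝ) ∉ ball t₀ r := fun h1 => (hball h1).2.2.ne' rfl
  have hφ1 : deriv φ 1 = 0 := by
    have hts : (1:ℝ) ∉ tsupport φ := by
      rw [f.tsupport_eq]
      intro hmem1
      exact h1not (closedBall_subset_ball (show f.rOut < r by show 3*r/4 < r; linarith) hmem1)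
    have hev : φ =ᶠ[nhds (1:ℝ)] (fun _ => (0:ℝ)) :=
      notMem_tsupport_iff_eventuallyEq.mp hts
    rw [hev.deriv_eq]
    exact deriv_const _ _
  -- pointwise nonnegativity
  have hnn : ∀ t, 0 ≤ E t * φ t := by
    intro t
    rcases eq_or_ne (φ t) 0 with h0 | h0
    · simp [h0]
    · have htb : t ∈ ball t₀ r := hsub (by rw [← hsupp]; exact Function.mem_support.mpr h0)
      have : E t₀ / 2 < E t := (hball htb).1
      exact mul_nonneg (by linarith) f.nonneg
  have hmem : ∀ s ∈ Set.Icc (t₀ - r/2) (t₀ + r/2), s ∈ ball t₀ r := by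
    intro s hs
    rw [mem_ball, Real.dist_eq]
    rcases hs with ⟨h1, h2⟩
    rw [abs_sub_lt_iff]
    constructor <;> linarith
  have hle1 : 0 < t₀ - r/2 := by
    have := (hball (hmem _ ⟨le_refl _, by linarith⟩)).2.1
    linarith
  have hle2 : t₀ + r/2 < 1 := (hball (hmem _ ⟨by linarith, le_refl _⟩)).2.2
  have hφcont : Continuous φ := f.contDiff (n := 1).continuous
  have hEφcont : Continuous (fun t => E t * φ t) := hE.mul hφcont
  -- middle integral is large
  have hmid : E t₀ / 2 * r ≤ ∫ t in (t₀ - r/2)..(t₀ + r/2), E t * φ t := by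
    have hmono := intervalIntegral.integral_mono_on (μ := volume) (a := t₀ - r/2) (b := t₀ + r/2)
      (f := fun _ => E t₀ / 2) (g := fun t => E t * φ t) (by linarith)
      (intervalIntegrable_const) (hEφcont.intervalIntegrable _ _) ?_
    · have : (∫ _ in (t₀ - r/2)..(t₀ + r/2), (E t₀ / 2 : ℝ)) = E t₀ / 2 * r := by
        simp [intervalIntegral.integral_const, smul_eq_mul]
        ring
      linarith [hmono, this ▸ hmono]
    · intro s hs
      have hb : s ∈ ball t₀ r := hmem s hs
      have hcb : s ∈ closedBall t₀ f.rIn := by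
        show dist s t₀ ≤ f.rIn
        rw [Real.dist_eq]
        show |s - t₀| ≤ r/2
        rw [abs_sub_le_iff]
        exact ⟨by linarith [hs.2], by linarith [hs.1]⟩
      have hone : φ s = 1 := f.one_of_mem_closedBall hcb
      show E t₀ / 2 ≤ E s * φ s
      rw [hone, mul_one]
      exact le_of_lt (hball hb).1
  -- split the full integral
  have hi1 : (0:ℝ) ≤ ∫ t in (0:ℝ)..(t₀ - r/2), E t * φ t :=
    intervalIntegral.integral_nonneg (by linarith) (fun t _ => hnn t)
  have hi3 : (0:ℝ) ≤ ∫ t in (t₀ + r/2)..(1:ℝ), E t * φ t :=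
    intervalIntegral.integral_nonneg (by linarith) (fun t _ => hnn t)
  have hsplit : (∫ t in (0:ℝ)..1, E t * φ t)
      = (∫ t in (0:ℝ)..(t₀ - r/2), E t * φ t)
        + (∫ t in (t₀ - r/2)..(t₀ + r/2), E t * φ t)
        + ∫ t in (t₀ + r/2)..(1:ℝ), E t * φ t := by
    rw [intervalIntegral.integral_add_adjacent_intervals,
      intervalIntegral.integral_add_adjacent_intervals] <;>
      exact hEφcont.intervalIntegrable _ _
  have hzero' := h φ (f.contDiff) hφ0 hφ1
  rw [hsplit] at hzero'
  nlinarith [hmid, hi1, hi3, hr, hpos]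

theorem euler_lagrange_of_minimizer (a : ℝ) (ha : 0 ≤ a)
    (g : ℝ → ℝ) (hg : ContDiff ℝ 1 g)
    (F : ℝ → ℝ) (hF : ContDiff ℝ 2 F) (hF0 : F 0 = 0) (hF1 : deriv F 1 = 0)
    (hmin : ∀ f : ℝ → ℝ, ContDiff ℝ 1 f → f 0 = 0 → deriv f 1 = 0 →
      gameS a F g ≤ gameS a f g) :
    ∀ t ∈ Set.Ioo (0:ℝ) 1,
      deriv (deriv F) t = -(a / 2) * Real.cos (F t - g t) := by
  intro t₀ ht₀
  have hF' : ContDiff ℝ 1 (deriv F) := by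
    have h2 : ContDiff ℝ ((1:ℕ) + 1) F := by exact_mod_cast hF
    exact (contDiff_succ_iff_deriv.mp h2).2.2
  have hF''c : Continuous (deriv (deriv F)) := hF'.continuous_deriv le_rfl
  have hFc : Continuous F := (hF.of_le (by norm_num : (1: WithTop ℕ∞) ≤ 2)).continuous
  have hgc : Continuous g := hg.continuous
  have hEcont : Continuous (fun t => 2 * deriv (deriv F) t + a * Real.cos (F t - g t)) :=
    (continuous_const.mul hF''c).add
      (continuous_const.mul (Real.continuous_cos.comp (hFc.sub hgc)))
  have hE0 : 2 * deriv (deriv F) t₀ + a * Real.cos (F t₀ - g t₀) = 0 := by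
    by_contra hne
    rcases lt_or_gt_of_ne hne with hlt | hgt
    · exact fund_pos (fun t => -(2 * deriv (deriv F) t + a * Real.cos (F t - g t)))
        hEcont.neg
        (fun φ h1 h2 h3 => by
          have hk := keyA a g hg F hF hF0 hF1 hmin φ h1 h2 h3
          have heq : (∫ t in (0:ℝ)..1,
              (-(2 * deriv (deriv F) t + a * Real.cos (F t - g t))) * φ t)
              = -∫ t in (0:ℝ)..1,
                (2 * deriv (deriv F) t + a * Real.cos (F t - g t)) * φ t := by
            rw [← intervalIntegral.integral_neg]
            apply intervalIntegral.integral_congr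
            intro t _
            ring
          rw [heq, hk, neg_zero])
        t₀ ht₀ (by simpa using by linarith)
    · exact fund_pos (fun t => 2 * deriv (deriv F) t + a * Real.cos (F t - g t))
        hEcont
        (fun φ h1 h2 h3 => keyA a g hg F hF hF0 hF1 hmin φ h1 h2 h3)
        t₀ ht₀ hgt
  linarith
end

section
/- Fix a real number a. For every continuously differentiable f : ℝ → ℝ with f(0) = 0, one has ∫₀¹ (f'(t)² − a·f(t)) dt ≥ −a²/12, with equality when f(t) = (a/4)·t·(2 − t). That is, F(t) = (a/4)·t·(2 − t) is the absolute minimizer of the linearized functional among admissible functions. -/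
open Real intervalIntegral

lemma key_identity (a : ℝ) (f : ℝ → ℝ) (hf : ContDiff ℝ 1 f) (h0 : f 0 = 0) :
    ∫ t in (0:ℝ)..1, ((deriv f t) ^ 2 - a * f t) =
      (∫ t in (0:ℝ)..1, (deriv f t - a / 2 * (1 - t)) ^ 2) - a ^ 2 / 12 := by
  have hc : Continuous (deriv f) := hf.continuous_deriv le_rfl
  have hfc : Continuous f := hf.continuous
  -- integration by parts
  have hIBP : (∫ t in (0:ℝ)..1, (a * (1 - t)) * deriv f t) = ∫ t in (0:ℝ)..1, a * f t := by
    have hu : ∀ x ∈ Set.uIcc (0:ℝ) 1, HasDerivAt (fun t : ℝ => a * (1 - t)) (-a) x := by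
      intro x _
      have := ((hasDerivAt_const x (1:ℝ)).sub (hasDerivAt_id x)).const_mul a
      convert this using 1 <;> (try simp only [id_eq]) <;> (try rfl) <;> ring
    have hv : ∀ x ∈ Set.uIcc (0:ℝ) 1, HasDerivAt f (deriv f x) x := by
      intro x _
      exact (hf.differentiable one_ne_zero x).hasDerivAt
    have h := intervalIntegral.integral_mul_deriv_eq_deriv_mul hu hv
      (intervalIntegrable_const) (hc.intervalIntegrable 0 1)
    rw [h, h0]
    simp [intervalIntegral.integral_neg]
  -- integral of (a/2 (1-t))^2
  have hC : (∫ t in (0:ℝ)..1, (a / 2 * (1 - t)) ^ 2) = a ^ 2 / 12 := by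
    have : ∀ x ∈ Set.uIcc (0:ℝ) 1,
        HasDerivAt (fun t : ℝ => -(a ^ 2 / 12) * (1 - t) ^ 3) ((a / 2 * (1 - x)) ^ 2) x := by
      intro x _
      have := (((hasDerivAt_const x (1:ℝ)).sub (hasDerivAt_id x)).pow 3).const_mul (-(a ^ 2 / 12))
      convert this using 1 <;> (try simp only [id_eq, Pi.sub_apply]) <;> (try rfl) <;> ring
    rw [intervalIntegral.integral_eq_sub_of_hasDerivAt this
      (((continuous_const.mul (continuous_const.sub continuous_id)).pow 2).intervalIntegrable 0 1)]
    ring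
  have h1 : IntervalIntegrable (fun t => (deriv f t) ^ 2) MeasureTheory.volume 0 1 :=
    ((hc.pow 2)).intervalIntegrable 0 1
  have h2 : IntervalIntegrable (fun t : ℝ => (a * (1 - t)) * deriv f t) MeasureTheory.volume 0 1 :=
    ((continuous_const.mul (continuous_const.sub continuous_id)).mul hc).intervalIntegrable 0 1
  have h3 : IntervalIntegrable (fun t : ℝ => (a / 2 * (1 - t)) ^ 2) MeasureTheory.volume 0 1 :=
    ((continuous_const.mul (continuous_const.sub continuous_id)).pow 2).intervalIntegrable 0 1
  have h4 : IntervalIntegrable (fun t : ℝ => a * f t) MeasureTheory.volume 0 1 :=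
    (continuous_const.mul hfc).intervalIntegrable 0 1
  have expand : (fun t : ℝ => (deriv f t - a / 2 * (1 - t)) ^ 2)
      = fun t : ℝ => ((deriv f t) ^ 2 - (a * (1 - t)) * deriv f t) + (a / 2 * (1 - t)) ^ 2 :=
    funext fun t => by ring
  rw [expand] at *
  rw [intervalIntegral.integral_add (h1.sub h2) h3, intervalIntegral.integral_sub h1 h2, hIBP, hC,
    intervalIntegral.integral_sub h1 h4]
  ring

theorem linearized_functional_minimizer (a : ℝ) :
    (∀ f : ℝ → ℝ, ContDiff ℝ 1 f → f 0 = 0 →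
      ∫ t in (0:ℝ)..1, ((deriv f t) ^ 2 - a * f t) ≥ -a ^ 2 / 12) ∧
    (∫ t in (0:ℝ)..1,
        ((deriv (fun t : ℝ => (a / 4) * t * (2 - t)) t) ^ 2
          - a * ((a / 4) * t * (2 - t))) = -a ^ 2 / 12) := by
  constructor
  · intro f hf h0
    rw [ge_iff_le, key_identity a f hf h0]
    have : (0:ℝ) ≤ ∫ t in (0:ℝ)..1, (deriv f t - a / 2 * (1 - t)) ^ 2 :=
      intervalIntegral.integral_nonneg (by norm_num) (fun t _ => sq_nonneg _)
    linarith
  · have hF : ContDiff ℝ 1 (fun t : ℝ => (a / 4) * t * (2 - t)) :=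
      (contDiff_const.mul contDiff_id).mul (contDiff_const.sub contDiff_id)
    have h0 : (fun t : ℝ => (a / 4) * t * (2 - t)) 0 = 0 := by simp
    rw [key_identity a _ hF h0]
    have hd : ∀ t : ℝ, deriv (fun t : ℝ => (a / 4) * t * (2 - t)) t = a / 2 * (1 - t) := by
      intro t
      have : HasDerivAt (fun t : ℝ => (a / 4) * t * (2 - t)) (a / 2 * (1 - t)) t := by
        have := ((hasDerivAt_id t).const_mul (a / 4)).mul
          ((hasDerivAt_const t (2:ℝ)).sub (hasDerivAt_id t))
        convert this using 1 <;> (try simp only [id_eq, Pi.sub_apply]) <;> (try rfl) <;> ring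
      exact this.deriv
    have : (∫ t in (0:ℝ)..1, (deriv (fun t : ℝ => (a / 4) * t * (2 - t)) t - a / 2 * (1 - t)) ^ 2) = 0 := by
      simp [hd]
    rw [this]
    ring
end

section
/- Fix a ≥ 0. For every continuously differentiable h : ℝ → ℝ with h(0) = 0 and h'(1) = 0, one has ∫₀¹ (h'(t)² − a·h(t) + a·sin(h(t))) dt ≥ ((π/2)² − a/π) · ∫₀¹ h(t)² dt. -/
open Real intervalIntegral MeasureTheory

lemma key_half (x : ℝ) (hx0 : 0 ≤ x) (hx : x ≤ π / 2) : x - x ^ 2 / π ≤ Real.sin x := by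
  have hpi := Real.pi_gt_d6
  have hpi2 := Real.pi_lt_d2
  have hp : (0:ℝ) < π := by linarith
  have hd : x ^ 2 / π * π = x ^ 2 := by field_simp
  rcases le_or_gt x 1 with h1 | h1
  · rcases eq_or_lt_of_le hx0 with rfl | hx0'
    · simp
    · have hcube : x - x ^ 3 / 4 < Real.sin x := by nlinarith [Real.sin_gt_sub_cube hx0', pow_pos hx0' 3]
      have h34 : x ^ 3 / 4 ≤ x ^ 2 / π := by
        rw [div_le_div_iff₀ (by norm_num) hp]
        have hx3 : x ^ 3 ≤ x ^ 2 := by nlinarith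
        nlinarith [mul_le_mul_of_nonneg_right hx3 hp.le, sq_nonneg x]
      linarith
  · have hc : 1 - (π / 2 - x) ^ 2 / 2 ≤ Real.sin x := by
      have := Real.one_sub_sq_div_two_le_cos (x := π / 2 - x)
      rwa [Real.cos_pi_div_two_sub] at this
    have hu : 0 ≤ π / 2 - x := by linarith
    have hu1 : π / 2 - x ≤ π / 2 - 1 := by linarith
    have hu2 : (π / 2 - x) ^ 2 ≤ (π / 2 - 1) ^ 2 := by nlinarith
    have h2 : x - x ^ 2 / π ≤ 1 - (π / 2 - x) ^ 2 / 2 := by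
      nlinarith [hd, hu2, sq_nonneg (π / 2 - x)]
    linarith

lemma key (x : ℝ) : x - x ^ 2 / π ≤ Real.sin x := by
  have hpi : (0:ℝ) < π := Real.pi_pos
  have hd : x ^ 2 / π * π = x ^ 2 := by field_simp
  rcases le_or_gt x 0 with h0 | h0
  · have h1 := Real.le_sin h0
    have h2 : 0 ≤ x ^ 2 / π := by positivity
    linarith
  rcases le_or_gt x (π / 2) with h2 | h2
  · exact key_half x h0.le h2
  rcases le_or_gt x π with h3 | h3
  · have hy := key_half (π - x) (by linarith) (by linarith)
    rw [Real.sin_pi_sub] at hy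
    have heq : (π - x) - (π - x) ^ 2 / π = x - x ^ 2 / π := by field_simp; ring
    linarith
  · have hs : Real.sin (x - π) ≤ x - π := Real.sin_le (by linarith)
    rw [Real.sin_sub_pi] at hs
    have : x - x ^ 2 / π ≤ -(x - π) := by nlinarith [sq_nonneg (x - π)]
    linarith

lemma wirtinger (h : ℝ → ℝ) (hh : ContDiff ℝ 1 h) (hh0 : h 0 = 0) :
    (π / 2) ^ 2 * ∫ t in (0:ℝ)..1, (h t) ^ 2 ≤ ∫ t in (0:ℝ)..1, (deriv h t) ^ 2 := by
  have hp : (0:ℝ) < π := Real.pi_pos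
  have hcont : Continuous h := hh.continuous
  have hdcont : Continuous (deriv h) := hh.continuous_deriv le_rfl
  have hder : ∀ t : ℝ, HasDerivAt h (deriv h t) t := fun t =>
    ((hh.differentiable one_ne_zero) t).hasDerivAt
  obtain ⟨M, hM⟩ := (isCompact_Icc : IsCompact (Set.Icc (0:ℝ) 1)).exists_bound_of_continuousOn
    hdcont.continuousOn
  have hM0 : 0 ≤ M := le_trans (norm_nonneg _) (hM 0 (by norm_num))
  have hht : ∀ t ∈ Set.Icc (0:ℝ) 1, |h t| ≤ M * t := by
    intro t ht
    have hint : ∫ s in (0:ℝ)..t, deriv h s = h t - h 0 :=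
      intervalIntegral.integral_deriv_eq_sub (fun x _ => (hh.differentiable one_ne_zero) x)
        (hdcont.intervalIntegrable 0 t)
    have hb : ‖∫ s in (0:ℝ)..t, deriv h s‖ ≤ M * |t - 0| := by
      apply intervalIntegral.norm_integral_le_of_norm_le_const
      intro x hx
      apply hM
      have hsub : Set.uIoc (0:ℝ) t ⊆ Set.Icc 0 1 := by
        rw [Set.uIoc_of_le ht.1]
        exact fun y hy => ⟨hy.1.le, hy.2.trans ht.2⟩
      exact hsub hx
    rw [hint, hh0, sub_zero] at hb
    simpa [abs_of_nonneg ht.1] using hb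
  set f : ℝ → ℝ := fun t => (deriv h t) ^ 2 - (π / 2) ^ 2 * (h t) ^ 2 with hf
  have hfc : Continuous f := by fun_prop
  have hfint : ∀ a b : ℝ, IntervalIntegrable f volume a b := fun a b =>
    hfc.intervalIntegrable a b
  have hkey : ∀ ε ∈ Set.Ioc (0:ℝ) 1, -(M ^ 2 * ε) ≤ ∫ t in ε..1, f t := by
    intro ε hε
    obtain ⟨hε0, hε1⟩ := hε
    set c : ℝ → ℝ := fun t => (π / 2) * (Real.cos (π * t / 2) / Real.sin (π * t / 2)) with hcdef
    set F' : ℝ → ℝ := fun t =>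
      2 * c t * h t * deriv h t - (π / 2) ^ 2 / (Real.sin (π * t / 2)) ^ 2 * (h t) ^ 2 with hF'
    have hsin : ∀ t ∈ Set.Icc ε 1, 0 < Real.sin (π * t / 2) := by
      intro t ht
      apply Real.sin_pos_of_pos_of_lt_pi
      · nlinarith [ht.1]
      · nlinarith [ht.2]
    have hid : ∀ t ∈ Set.Icc ε 1,
        (π / 2) ^ 2 / (Real.sin (π * t / 2)) ^ 2 = (π / 2) ^ 2 + (c t) ^ 2 := by
      intro t ht
      have hs := hsin t ht
      have hpyth := Real.sin_sq_add_cos_sq (π * t / 2)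
      rw [hcdef]
      field_simp
      linear_combination (-1) * hpyth
    have hFder : ∀ t ∈ Set.uIcc ε 1, HasDerivAt (fun t => c t * (h t) ^ 2) (F' t) t := by
      intro t ht
      rw [Set.uIcc_of_le hε1] at ht
      have hs := hsin t ht
      have hlin : HasDerivAt (fun t : ℝ => π * t / 2) (π / 2) t := by
        simpa using ((hasDerivAt_id t).const_mul π).div_const 2
      have hsd : HasDerivAt (fun t : ℝ => Real.sin (π * t / 2)) (Real.cos (π * t / 2) * (π / 2)) t :=
        hlin.sin
      have hcd : HasDerivAt (fun t : ℝ => Real.cos (π * t / 2)) (-Real.sin (π * t / 2) * (π / 2)) t :=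
        hlin.cos
      have hnum : -Real.sin (π * t / 2) * (π / 2) * Real.sin (π * t / 2) -
          Real.cos (π * t / 2) * (Real.cos (π * t / 2) * (π / 2)) = -(π / 2) := by
        have := Real.sin_sq_add_cos_sq (π * t / 2)
        nlinarith [this]
      have hcderiv : HasDerivAt c ((π / 2) *
          ((-Real.sin (π * t / 2) * (π / 2) * Real.sin (π * t / 2) -
            Real.cos (π * t / 2) * (Real.cos (π * t / 2) * (π / 2))) /
            (Real.sin (π * t / 2)) ^ 2)) t :=
        (hcd.div hsd hs.ne').const_mul (π / 2)
      rw [hnum] at hcderiv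
      have hh2 : HasDerivAt (fun t => (h t) ^ 2) (2 * h t * deriv h t) t := by
        simpa using (hder t).fun_pow 2
      have hmul : HasDerivAt (fun t => c t * (h t) ^ 2) (π / 2 * (-(π / 2) / Real.sin (π * t / 2) ^ 2) * h t ^ 2 + c t * (2 * h t * deriv h t)) t := hcderiv.fun_mul hh2
      convert hmul using 1
      rw [hF', hcdef]
      field_simp
      ring
    have hccont : ContinuousOn c (Set.Icc ε 1) := by
      apply continuousOn_const.mul
      exact ContinuousOn.div (by fun_prop) (by fun_prop) (fun t ht => (hsin t ht).ne')
    have hF'cont : ContinuousOn F' (Set.Icc ε 1) := by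
      apply ContinuousOn.sub
      · exact ((continuousOn_const.mul hccont).mul hcont.continuousOn).mul hdcont.continuousOn
      · exact (ContinuousOn.div continuousOn_const (by fun_prop)
          (fun t ht => pow_ne_zero 2 (hsin t ht).ne')).mul (by fun_prop)
    have hFint : IntervalIntegrable F' volume ε 1 := by
      apply ContinuousOn.intervalIntegrable
      rwa [Set.uIcc_of_le hε1]
    have hFTC : ∫ t in ε..1, F' t = c 1 * (h 1) ^ 2 - c ε * (h ε) ^ 2 :=
      intervalIntegral.integral_eq_sub_of_hasDerivAt hFder hFint
    have hc1 : c 1 = 0 := by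
      rw [hcdef]
      have : π * 1 / 2 = π / 2 := by ring
      simp [this, Real.cos_pi_div_two]
    have hnn : 0 ≤ ∫ t in ε..1, (f t - F' t) := by
      apply intervalIntegral.integral_nonneg hε1
      intro t ht
      have hidt := hid t ht
      rw [hf, hF']
      simp only
      rw [hidt]
      nlinarith [sq_nonneg (deriv h t - c t * h t)]
    have hsplit : ∫ t in ε..1, f t = (∫ t in ε..1, (f t - F' t)) + ∫ t in ε..1, F' t := by
      rw [← intervalIntegral.integral_add ((hfint ε 1).sub hFint) hFint]
      simp
    have hεI : ε ∈ Set.Icc ε 1 := ⟨le_refl ε, hε1⟩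
    have hsε := hsin ε hεI
    have hcb : c ε * ε ≤ 1 := by
      have hy0 : 0 < π * ε / 2 := by nlinarith
      have hy1 : π * ε / 2 ≤ π / 2 := by nlinarith
      have hcos_mul : Real.cos (π * ε / 2) * (π * ε / 2) ≤ Real.sin (π * ε / 2) := by
        rcases lt_or_eq_of_le hy1 with hlt | heq
        · have htan := Real.lt_tan hy0 hlt
          have hcos : 0 < Real.cos (π * ε / 2) :=
            Real.cos_pos_of_mem_Ioo ⟨by linarith, hlt⟩
          rw [Real.tan_eq_sin_div_cos, lt_div_iff₀ hcos] at htan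
          linarith [htan]
        · rw [heq]
          simp [Real.cos_pi_div_two, Real.sin_pi_div_two]
      have he : π / 2 * (Real.cos (π * ε / 2) / Real.sin (π * ε / 2)) * ε
          = (Real.cos (π * ε / 2) * (π * ε / 2)) / Real.sin (π * ε / 2) := by ring
      rw [hcdef]
      simp only
      rw [he, div_le_one hsε]
      exact hcos_mul
    have hhb : (h ε) ^ 2 ≤ (M * ε) ^ 2 := by
      have := hht ε ⟨hε0.le, hε1⟩
      nlinarith [abs_nonneg (h ε), sq_abs (h ε)]
    have hFεb : c ε * (h ε) ^ 2 ≤ M ^ 2 * ε := by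
      nlinarith [sq_nonneg (h ε), hε0, hcb, hhb, mul_pos hε0 hε0]
    have : ∫ t in ε..1, f t ≥ -(c ε * (h ε) ^ 2) := by
      rw [hsplit, hFTC, hc1]
      linarith
    linarith
  have hGc : Continuous (fun x : ℝ => ∫ t in x..1, f t) := by
    have hprim := (intervalIntegral.continuous_primitive hfint 1).neg
    have heq : (fun x : ℝ => ∫ t in x..1, f t) = fun x : ℝ => -∫ t in (1:ℝ)..x, f t := by
      funext x
      rw [intervalIntegral.integral_symm]
    rw [heq]
    exact hprim
  have h0le : 0 ≤ ∫ t in (0:ℝ)..1, f t := by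
    have hcont2 : Continuous (fun x : ℝ => (∫ t in x..1, f t) + M ^ 2 * x) :=
      hGc.add (by fun_prop)
    have htend : Filter.Tendsto (fun x : ℝ => (∫ t in x..1, f t) + M ^ 2 * x)
        (nhdsWithin 0 (Set.Ioi 0)) (nhds ((∫ t in (0:ℝ)..1, f t) + M ^ 2 * 0)) :=
      (hcont2.tendsto 0).mono_left nhdsWithin_le_nhds
    have hev : ∀ᶠ x in nhdsWithin (0:ℝ) (Set.Ioi 0), 0 ≤ (∫ t in x..1, f t) + M ^ 2 * x := by
      filter_upwards [Ioc_mem_nhdsGT (by norm_num : (0:ℝ) < 1)]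
        with ε hε
      linarith [hkey ε hε]
    have := ge_of_tendsto htend hev
    simpa using this
  have hsplitf : ∫ t in (0:ℝ)..1, f t =
      (∫ t in (0:ℝ)..1, (deriv h t) ^ 2) - (π / 2) ^ 2 * ∫ t in (0:ℝ)..1, (h t) ^ 2 := by
    rw [hf]
    rw [intervalIntegral.integral_sub (by apply Continuous.intervalIntegrable; fun_prop)
      (by apply Continuous.intervalIntegrable; fun_prop)]
    rw [intervalIntegral.integral_const_mul]
  linarith

theorem deviation_integral_lower_bound (a : ℝ) (ha : 0 ≤ a)
    (h : ℝ → ℝ) (hh : ContDiff ℝ 1 h) (hh0 : h 0 = 0) (hh1 : deriv h 1 = 0) :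
    ∫ t in (0:ℝ)..1, ((deriv h t) ^ 2 - a * h t + a * Real.sin (h t))
      ≥ ((π / 2) ^ 2 - a / π) * ∫ t in (0:ℝ)..1, (h t) ^ 2 := by
  have hw := wirtinger h hh hh0
  have hcont : Continuous h := hh.continuous
  have hdcont : Continuous (deriv h) := hh.continuous_deriv le_rfl
  have hmono : ∫ t in (0:ℝ)..1, ((deriv h t) ^ 2 - a / π * (h t) ^ 2)
      ≤ ∫ t in (0:ℝ)..1, ((deriv h t) ^ 2 - a * h t + a * Real.sin (h t)) := by
    apply intervalIntegral.integral_mono_on (by norm_num)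
    · apply Continuous.intervalIntegrable; fun_prop
    · apply Continuous.intervalIntegrable; fun_prop
    · intro t ht
      have hk := key (h t)
      have h1 : a * (h t - Real.sin (h t)) ≤ a * ((h t) ^ 2 / π) :=
        mul_le_mul_of_nonneg_left (by linarith) ha
      have h2 : a * ((h t) ^ 2 / π) = a / π * (h t) ^ 2 := by ring
      linarith
  have hsplit : ∫ t in (0:ℝ)..1, ((deriv h t) ^ 2 - a / π * (h t) ^ 2)
      = (∫ t in (0:ℝ)..1, (deriv h t) ^ 2) - a / π * ∫ t in (0:ℝ)..1, (h t) ^ 2 := by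
    rw [intervalIntegral.integral_sub (by apply Continuous.intervalIntegrable; fun_prop)
      (by apply Continuous.intervalIntegrable; fun_prop)]
    rw [intervalIntegral.integral_const_mul]
  have hring : ((π / 2) ^ 2 - a / π) * ∫ t in (0:ℝ)..1, (h t) ^ 2
      = (π / 2) ^ 2 * (∫ t in (0:ℝ)..1, (h t) ^ 2) - a / π * ∫ t in (0:ℝ)..1, (h t) ^ 2 := by
    ring
  linarith
end

section
/- Fix a with 0 ≤ a ≤ π³/4 and let f(t) = (a/4)·t·(2 − t). Then for every continuously differentiable g : ℝ → ℝ with g(0) = 0 and g'(1) = 0, one has S(g, f) ≥ 0 = S(f, f). In other words, the pure strategy f is a Nash equilibrium of the game: no admissible deviation by either player improves their payoff. -/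
open Real intervalIntegral

lemma sin_ge_sub_cube' (y : ℝ) (hy : 0 ≤ y) : y - y^3/6 ≤ Real.sin y := by
  have hmono : Monotone (fun y : ℝ => Real.sin y - y + y^3/6) := by
    apply monotone_of_deriv_nonneg
    · fun_prop
    · intro x
      have hd : HasDerivAt (fun y : ℝ => Real.sin y - y + y^3/6)
          (Real.cos x - 1 + x^2/2) x := by
        have h1 : HasDerivAt (fun y : ℝ => y^3/6) (3*x^2/6) x := by
          simpa using ((hasDerivAt_pow 3 x).div_const 6)
        have := ((Real.hasDerivAt_sin x).sub (hasDerivAt_id x)).add h1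
        exact this.congr_deriv (by ring)
      rw [hd.deriv]
      have := Real.one_sub_sq_div_two_le_cos (x := x)
      linarith
  have := hmono hy
  simp only [Real.sin_zero] at this
  nlinarith [this]

lemma sin_sub_le_sq_div_pi (x : ℝ) : Real.sin x - x ≤ x^2 / π := by
  have hπ := Real.pi_pos
  rcases le_or_gt 0 x with hx | hx
  · have h1 := Real.sin_le hx
    have : 0 ≤ x^2/π := by positivity
    linarith
  · set y := -x with hy
    have hy0 : 0 < y := by simp [hy]; linarith
    have key : y - y^2/π ≤ Real.sin y := by
      rcases le_or_gt y (3/2) with h1 | h1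
      · have h2 := sin_ge_sub_cube' y hy0.le
        have h3 : y^3/6 ≤ y^2/π := by
          rw [div_le_div_iff₀ (by norm_num) hπ]
          have hπ4 : π ≤ 4 := Real.pi_le_four
          have hy6 : π * y ≤ 6 := by nlinarith
          nlinarith [sq_nonneg y]
        linarith
      · rcases le_or_gt y π with h2 | h2
        · set z := π - y with hz
          have hz0 : 0 ≤ z := by simp [hz]; linarith
          have hz1 : z * π ≤ 6 := by
            nlinarith [Real.pi_lt_d2]
          have h3 := sin_ge_sub_cube' z hz0
          have h4 : z^3/6 ≤ z^2/π := by
            rw [div_le_div_iff₀ (by norm_num) hπ]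
            nlinarith [sq_nonneg z, mul_nonneg hz0 hz0]
          have h5 : Real.sin y = Real.sin z := by
            rw [hz, Real.sin_pi_sub]
          have h6 : z - z^2/π = y - y^2/π := by
            rw [hz]; field_simp; ring
          linarith
        · have h3 : Real.sin y = - Real.sin (y - π) := by
            have := Real.sin_add_pi (y - π)
            rw [sub_add_cancel] at this
            linarith
          have h4 : Real.sin (y - π) ≤ y - π := Real.sin_le (by linarith)
          have h5 : y - y^2/π ≤ -(y - π) := by
            rw [← sub_nonneg,
              show -(y-π) - (y - y^2/π) = (y-π)^2/π from by field_simp; ring]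
            positivity
          linarith
    have h6 : Real.sin x = - Real.sin y := by simp [hy]
    have h7 : x^2/π = y^2/π := by rw [hy]; ring_nf
    have h8 : x = -y := by rw [hy, neg_neg]
    linarith


lemma pointwise_ineq (a u s c d : ℝ) (ha0 : 0 ≤ a) (ha : a ≤ π^3/4) (hs : 0 < s) :
    (π/2) * (((-s*(π/2))*s - c*(c*(π/2)))/s^2) * u^2 + (π/2)*(c/s)*(2*u*d)
      ≤ d^2 + a*(u - Real.sin u) := by
  have hπ := Real.pi_pos
  rw [← sub_nonneg]
  have hmain : 0 ≤ (s*d - (π/2)*c*u)^2 + (π^2/4)*u^2*s^2 + a*s^2*(u - Real.sin u) := by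
    have h1 : Real.sin u - u ≤ u^2/π := sin_sub_le_sq_div_pi u
    have h2 : a*s^2*(Real.sin u - u) ≤ a*s^2*(u^2/π) :=
      mul_le_mul_of_nonneg_left h1 (by positivity)
    have h3 : a*s^2*(u^2/π) ≤ (π^2/4)*u^2*s^2 := by
      have h4 : a * (s^2*u^2) ≤ (π^3/4) * (s^2*u^2) :=
        mul_le_mul_of_nonneg_right ha (by positivity)
      rw [show a*s^2*(u^2/π) = (a*(s^2*u^2))/π by ring,
        show (π^2/4)*u^2*s^2 = ((π^3/4)*(s^2*u^2))/π by field_simp]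
      exact div_le_div_of_nonneg_right h4 hπ.le
    nlinarith [sq_nonneg (s*d - (π/2)*c*u)]
  have hexpand : s^2 * (d^2 + a*(u - Real.sin u) -
      ((π/2) * (((-s*(π/2))*s - c*(c*(π/2)))/s^2) * u^2 + (π/2)*(c/s)*(2*u*d)))
      = (s*d - (π/2)*c*u)^2 + (π^2/4)*u^2*s^2 + a*s^2*(u - Real.sin u) := by
    field_simp
    ring
  have hs2 : (0:ℝ) < s^2 := by positivity
  have : d^2 + a*(u - Real.sin u) -
      ((π/2) * (((-s*(π/2))*s - c*(c*(π/2)))/s^2) * u^2 + (π/2)*(c/s)*(2*u*d))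
      = (s^2 * (d^2 + a*(u - Real.sin u) -
      ((π/2) * (((-s*(π/2))*s - c*(c*(π/2)))/s^2) * u^2 + (π/2)*(c/s)*(2*u*d)))) / s^2 :=
    (mul_div_cancel_left₀ _ hs2.ne').symm
  rw [this, hexpand]
  exact div_nonneg hmain hs2.le


lemma hasDerivAt_sin_pi_half (t : ℝ) :
    HasDerivAt (fun u : ℝ => Real.sin (π*u/2)) (Real.cos (π*t/2) * (π/2)) t := by
  have h1 : HasDerivAt (fun u : ℝ => π*u/2) (π/2) t := by
    simpa using ((hasDerivAt_id t).const_mul π).div_const 2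
  exact (Real.hasDerivAt_sin (π*t/2)).comp t h1

lemma hasDerivAt_cos_pi_half (t : ℝ) :
    HasDerivAt (fun u : ℝ => Real.cos (π*u/2)) (-Real.sin (π*t/2) * (π/2)) t := by
  have h1 : HasDerivAt (fun u : ℝ => π*u/2) (π/2) t := by
    simpa using ((hasDerivAt_id t).const_mul π).div_const 2
  exact (Real.hasDerivAt_cos (π*t/2)).comp t h1


lemma key_nonneg (a : ℝ) (ha0 : 0 ≤ a) (ha : a ≤ π^3/4) (h : ℝ → ℝ)
    (hh : ContDiff ℝ 1 h) (h0 : h 0 = 0) :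
    0 ≤ ∫ t in (0:ℝ)..1, ((deriv h t)^2 + a * (h t - Real.sin (h t))) := by
  have hπ := Real.pi_pos
  have hhd : Differentiable ℝ h := hh.differentiable one_ne_zero
  have hdc : Continuous (deriv h) := hh.continuous_deriv le_rfl
  set F : ℝ → ℝ := fun t => (deriv h t)^2 + a*(h t - Real.sin (h t)) with hFdef
  have hFc : Continuous F := by
    exact (hdc.pow 2).add (continuous_const.mul
      (hh.continuous.sub (Real.continuous_sin.comp hh.continuous)))
  set G : ℝ → ℝ := fun t => (π/2) * (Real.cos (π*t/2) / Real.sin (π*t/2)) * (h t)^2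
    with hGdef
  set G' : ℝ → ℝ := fun t =>
      (π/2) * (((-Real.sin (π*t/2)*(π/2))*Real.sin (π*t/2)
          - Real.cos (π*t/2)*(Real.cos (π*t/2)*(π/2)))/(Real.sin (π*t/2))^2) * (h t)^2
        + (π/2)*(Real.cos (π*t/2)/Real.sin (π*t/2))*(2 * h t * deriv h t) with hG'def
  -- positivity of sin on (0,1]
  have hsin_pos : ∀ t : ℝ, 0 < t → t ≤ 1 → 0 < Real.sin (π*t/2) := by
    intro t ht0 ht1
    apply Real.sin_pos_of_pos_of_lt_pi
    · positivity
    · nlinarith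
  -- G has derivative G'
  have hG : ∀ t : ℝ, 0 < Real.sin (π*t/2) → HasDerivAt G (G' t) t := by
    intro t hs
    have h1 := (((hasDerivAt_cos_pi_half t).div (hasDerivAt_sin_pi_half t)
      hs.ne').const_mul (π/2)).mul ((hhd t).hasDerivAt.pow 2)
    refine h1.congr_deriv ?_
    simp [hG'def]
  -- bound M on deriv h
  obtain ⟨M, hM⟩ := (isCompact_Icc (a := (0:ℝ)) (b := 1)).exists_bound_of_continuousOn
    hdc.continuousOn
  have hM0 : 0 ≤ M := le_trans (norm_nonneg _) (hM 0 (by norm_num))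
  have hhx : ∀ x ∈ Set.Icc (0:ℝ) 1, |h x| ≤ M * x := by
    intro x hx
    have h2 := norm_image_sub_le_of_norm_deriv_le_segment'
      (f := h) (f' := deriv h) (a := (0:ℝ)) (b := 1)
      (fun t _ => (hhd t).hasDerivAt.hasDerivWithinAt)
      (fun t ht => hM t ⟨ht.1, ht.2.le⟩) x hx
    rw [h0] at h2
    simpa using h2
  -- bound C on F
  obtain ⟨C, hC⟩ := (isCompact_Icc (a := (0:ℝ)) (b := 1)).exists_bound_of_continuousOn
    hFc.continuousOn
  have hC0 : 0 ≤ C := le_trans (norm_nonneg _) (hC 0 (by norm_num))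
  -- main step : for x ∈ (0,1], ∫ x..1 F ≥ -(π/2)*M^2*x
  have hstep : ∀ x : ℝ, 0 < x → x ≤ 1 → -((π/2)*M^2*x) ≤ ∫ t in x..1, F t := by
    intro x hx0 hx1
    have huIcc : Set.uIcc x 1 = Set.Icc x 1 := Set.uIcc_of_le hx1
    have hspos : ∀ t ∈ Set.Icc x 1, 0 < Real.sin (π*t/2) :=
      fun t ht => hsin_pos t (lt_of_lt_of_le hx0 ht.1) ht.2
    -- continuity of G' on [x,1]
    have hG'cont : ContinuousOn G' (Set.Icc x 1) := by
      have hs : Continuous fun t : ℝ => Real.sin (π*t/2) := by fun_prop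
      have hc : Continuous fun t : ℝ => Real.cos (π*t/2) := by fun_prop
      apply ContinuousOn.add
      · apply ContinuousOn.mul
        · apply ContinuousOn.mul continuousOn_const
          exact ContinuousOn.div
            ((((hs.neg.mul continuous_const).mul hs).sub
              (hc.mul (hc.mul continuous_const))).continuousOn)
            ((hs.pow 2).continuousOn)
            (fun t ht => by have := hspos t ht; positivity)
        · exact (hh.continuous.pow 2).continuousOn
      · apply ContinuousOn.mul
        · apply ContinuousOn.mul continuousOn_const
          exact ContinuousOn.div hc.continuousOn hs.continuousOn
            (fun t ht => (hspos t ht).ne')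
        · exact ((continuous_const.mul hh.continuous).mul hdc).continuousOn
    have hG'int : IntervalIntegrable G' MeasureTheory.volume x 1 :=
      (hG'cont.mono (by rw [huIcc])).intervalIntegrable
    have hFint : IntervalIntegrable F MeasureTheory.volume x 1 :=
      hFc.intervalIntegrable x 1
    have hFTC : ∫ t in x..1, G' t = G 1 - G x := by
      apply intervalIntegral.integral_eq_sub_of_hasDerivAt
      · intro t ht
        rw [huIcc] at ht
        exact hG t (hspos t ht)
      · exact hG'int
    have hG1 : G 1 = 0 := by
      have : π * 1 / 2 = π/2 := by ring
      simp [hGdef, this, Real.cos_pi_div_two]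
    have hnn : 0 ≤ ∫ t in x..1, (F t - G' t) := by
      apply intervalIntegral.integral_nonneg hx1
      intro t ht
      have hsp := hspos t ht
      have := pointwise_ineq a (h t) (Real.sin (π*t/2)) (Real.cos (π*t/2)) (deriv h t)
        ha0 ha hsp
      simp only [hFdef, hG'def]
      linarith
    rw [intervalIntegral.integral_sub hFint hG'int] at hnn
    rw [hFTC, hG1] at hnn
    -- so  G x - 0 ≤ ∫ F ... : 0 ≤ ∫F - (0 - G x)
    -- bound G x ≤ (π/2)*M^2*x
    have hGx : G x ≤ (π/2)*M^2*x := by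
      have hsx : 0 < Real.sin (π*x/2) := hsin_pos x hx0 hx1
      have hsxge : x ≤ Real.sin (π*x/2) := by
        have := Real.mul_le_sin (x := π*x/2) (by positivity) (by nlinarith)
        calc x = 2/π * (π*x/2) := by field_simp
        _ ≤ Real.sin (π*x/2) := this
      have hcx : Real.cos (π*x/2) ≤ 1 := Real.cos_le_one _
      have hcx0 : 0 ≤ Real.cos (π*x/2) := by
        apply Real.cos_nonneg_of_mem_Icc
        constructor <;> nlinarith
      have hhx2 : (h x)^2 ≤ M^2*x^2 := by
        have := hhx x ⟨hx0.le, hx1⟩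
        nlinarith [abs_nonneg (h x), sq_abs (h x)]
      have hdivle : Real.cos (π*x/2) / Real.sin (π*x/2) ≤ 1/x := by
        rw [div_le_div_iff₀ hsx hx0]
        nlinarith
      have hdiv0 : 0 ≤ Real.cos (π*x/2) / Real.sin (π*x/2) := by positivity
      have hmul : (Real.cos (π*x/2) / Real.sin (π*x/2)) * (h x)^2 ≤ (1/x) * (M^2*x^2) :=
        mul_le_mul hdivle hhx2 (sq_nonneg _) (by positivity)
      have : (1/x) * (M^2*x^2) = M^2*x := by field_simp
      rw [this] at hmul
      calc G x = (π/2) * ((Real.cos (π*x/2) / Real.sin (π*x/2)) * (h x)^2) := by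
            simp [hGdef]; ring
        _ ≤ (π/2) * (M^2*x) := by
            apply mul_le_mul_of_nonneg_left hmul (by positivity)
        _ = (π/2)*M^2*x := by ring
    linarith
  -- combine
  by_contra hneg
  push_neg at hneg
  set I := ∫ t in (0:ℝ)..1, F t with hI
  set K := C + (π/2)*M^2 with hK
  have hK0 : 0 ≤ K := by positivity
  set x := min 1 (-I/(2*(K+1))) with hx
  have hx0 : 0 < x := by
    apply lt_min one_pos
    apply div_pos (by linarith) (by linarith)
  have hx1 : x ≤ 1 := min_le_left _ _
  have hxle : x ≤ -I/(2*(K+1)) := min_le_right _ _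
  have hsplit : I = (∫ t in (0:ℝ)..x, F t) + ∫ t in x..1, F t := by
    rw [hI]
    exact (intervalIntegral.integral_add_adjacent_intervals
      (hFc.intervalIntegrable 0 x) (hFc.intervalIntegrable x 1)).symm
  have hbound1 : -(C*x) ≤ ∫ t in (0:ℝ)..x, F t := by
    have hb := intervalIntegral.norm_integral_le_of_norm_le_const
      (C := C) (f := F) (a := (0:ℝ)) (b := x) ?_
    · rw [Real.norm_eq_abs, abs_le] at hb
      have : |x - 0| = x := by rw [abs_of_nonneg (by linarith)]; ring_nf
      rw [this] at hb
      linarith [hb.1]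
    · intro t ht
      rw [Set.uIoc_of_le hx0.le] at ht
      exact hC t ⟨ht.1.le, le_trans ht.2 hx1⟩
  have hbound2 := hstep x hx0 hx1
  have hcontr : -(K+1)*x ≤ I := by
    rw [hsplit]
    calc -(K+1)*x ≤ -(C*x) + -((π/2)*M^2*x) := by nlinarith
      _ ≤ (∫ t in (0:ℝ)..x, F t) + ∫ t in x..1, F t := add_le_add hbound1 hbound2
  rw [le_div_iff₀ (by linarith)] at hxle
  nlinarith [mul_pos (show (0:ℝ) < K+1 by linarith) hx0]

theorem nash_equilibrium_small_a (a : ℝ) (ha0 : 0 ≤ a) (ha : a ≤ π ^ 3 / 4)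
    (f : ℝ → ℝ) (hf : f = fun t => (a / 4) * t * (2 - t)) :
    (∀ g : ℝ → ℝ, ContDiff ℝ 1 g → g 0 = 0 → deriv g 1 = 0 →
      gameS a g f ≥ 0) ∧ gameS a f f = 0 := by
  have hπ := Real.pi_pos
  constructor
  · intro g hg hg0 _
    subst hf
    have hfC : ContDiff ℝ 1 (fun t : ℝ => (a/4)*t*(2-t)) :=
      (contDiff_const.mul contDiff_id).mul (contDiff_const.sub contDiff_id)
    have hfd : ∀ t : ℝ, HasDerivAt (fun u : ℝ => (a/4)*u*(2-u)) (a/2 - (a/2)*t) t := by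
      intro t
      have h1 : HasDerivAt (fun u : ℝ => (a/4)*u) (a/4) t := by
        simpa using (hasDerivAt_id t).const_mul (a/4)
      have h2 : HasDerivAt (fun u : ℝ => 2 - u) (-1) t := by
        simpa using (hasDerivAt_id t).const_sub (2:ℝ)
      have := h1.mul h2
      exact this.congr_deriv (by ring)
    simp only [gameS]
    set p : ℝ → ℝ := fun t => g t - (a/4)*t*(2-t) with hp
    have hpC : ContDiff ℝ 1 p := hg.sub hfC
    have hpdiff : Differentiable ℝ p := hpC.differentiable one_ne_zero
    have hp0 : p 0 = 0 := by simp [hp, hg0]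
    have hderivp : ∀ t : ℝ, deriv p t = deriv g t - (a/2 - (a/2)*t) := by
      intro t
      rw [hp, deriv_fun_sub ((hg.differentiable one_ne_zero) t) (hfd t).differentiableAt,
        (hfd t).deriv]
    have hderivf : ∀ t : ℝ, deriv (fun u : ℝ => (a/4)*u*(2-u)) t = a/2 - (a/2)*t :=
      fun t => (hfd t).deriv
    have key := key_nonneg a ha0 ha p hpC hp0
    have hdpc : Continuous (deriv p) := hpC.continuous_deriv le_rfl
    have hFc : Continuous (fun t : ℝ => (deriv p t)^2 + a*(p t - Real.sin (p t))) :=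
      (hdpc.pow 2).add (continuous_const.mul
        (hpC.continuous.sub (Real.continuous_sin.comp hpC.continuous)))
    have hDc : Continuous (fun t : ℝ => 2*(a/2-(a/2)*t)*(deriv p t) - a*(p t)) := by
      apply Continuous.sub
      · exact (continuous_const.mul
          ((continuous_const.sub (continuous_const.mul continuous_id)))).mul hdpc
      · exact continuous_const.mul hpC.continuous
    have hψ : ∀ t : ℝ, HasDerivAt (fun u => 2*(a/2 - (a/2)*u)*(p u))
        (2*(a/2-(a/2)*t)*(deriv p t) - a*(p t)) t := by
      intro t
      have h1 : HasDerivAt (fun u : ℝ => 2*(a/2 - (a/2)*u)) (-a) t := by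
        have := ((hasDerivAt_const t (a/2)).sub ((hasDerivAt_id t).const_mul (a/2))).const_mul 2
        exact this.congr_deriv (by ring)
      have := h1.mul ((hpdiff t).hasDerivAt)
      exact this.congr_deriv (by ring)
    have hD : (∫ t in (0:ℝ)..1, (2*(a/2-(a/2)*t)*(deriv p t) - a*(p t))) = 0 := by
      rw [intervalIntegral.integral_eq_sub_of_hasDerivAt (fun t _ => hψ t)
        (hDc.intervalIntegrable 0 1)]
      show 2*(a/2-(a/2)*1)*(p 1) - 2*(a/2-(a/2)*0)*(p 0) = 0
      rw [hp0]
      ring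
    have hptw : (fun t : ℝ => (deriv g t)^2 - (deriv (fun u : ℝ => (a/4)*u*(2-u)) t)^2
        - a*Real.sin (g t - (a/4)*t*(2-t)))
        = fun t => ((deriv p t)^2 + a*(p t - Real.sin (p t)))
          + (2*(a/2-(a/2)*t)*(deriv p t) - a*(p t)) := by
      funext t
      rw [hderivp t, hderivf t]
      have hpt : p t = g t - (a/4)*t*(2-t) := rfl
      rw [hpt]
      ring
    rw [ge_iff_le]
    calc (0:ℝ) ≤ ∫ t in (0:ℝ)..1, ((deriv p t)^2 + a*(p t - Real.sin (p t))) := key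
      _ = (∫ t in (0:ℝ)..1, ((deriv p t)^2 + a*(p t - Real.sin (p t))))
          + ∫ t in (0:ℝ)..1, (2*(a/2-(a/2)*t)*(deriv p t) - a*(p t)) := by rw [hD, add_zero]
      _ = ∫ t in (0:ℝ)..1, (((deriv p t)^2 + a*(p t - Real.sin (p t)))
          + (2*(a/2-(a/2)*t)*(deriv p t) - a*(p t))) :=
        (intervalIntegral.integral_add (hFc.intervalIntegrable 0 1)
          (hDc.intervalIntegrable 0 1)).symm
      _ = ∫ t in (0:ℝ)..1, ((deriv g t)^2 - (deriv (fun u : ℝ => (a/4)*u*(2-u)) t)^2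
          - a*Real.sin (g t - (a/4)*t*(2-t))) := by rw [hptw]
  · simp [gameS, sub_self]
end
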